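/- arXiv:1706.02167 — 4 statements merged into one kernel-verified Lean document; each statement's English description precedes it below -/
import Mathlib

section
/- Setting $y_j = 0$ for all $j$: the polynomials ${}^n c_p := \sum_{j=0}^p c_{p-j} e_j(x_1,\ldots,x_n)$ satisfy $({}^n c_p)^2 + 2\sum_{i=1}^p (-1)^i ({}^n c_{p+i})({}^n c_{p-i}) = e_p(x_1^2, \ldots, x_n^2)$ for all $p \geq 0$, in $\Gamma[x_1,\ldots,x_n]$. -/
noncomputable section
open MvPolynomial

/-- The element `c_p` of the free polynomial ring `ℤ[c_1, c_2, …]`, with the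
conventions `c_0 = 1` and `c_p = 0` for `p < 0`. -/
def cFree : ℤ → MvPolynomial ℕ ℤ := fun p =>
  if p ≤ 0 then (if p = 0 then 1 else 0) else X (p.toNat - 1)

/-- The relation `c_p² + 2 ∑_{i=1}^p (-1)^i c_{p+i} c_{p-i}`. -/
def relC (p : ℕ) : MvPolynomial ℕ ℤ :=
  cFree (p : ℤ) ^ 2 +
    2 * ∑ i ∈ Finset.Icc 1 p,
      (-1 : MvPolynomial ℕ ℤ) ^ i * cFree ((p : ℤ) + i) * cFree ((p : ℤ) - i)

/-- The ideal generated by the relations `relC p` for `p ≥ 1`. -/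
def IGam : Ideal (MvPolynomial ℕ ℤ) := Ideal.span {f | ∃ p : ℕ, 1 ≤ p ∧ f = relC p}

/-- The ring `Γ`. -/
abbrev GammaR := MvPolynomial ℕ ℤ ⧸ IGam

/-- The class of `c_p` in `Γ`. -/
def cQ : ℤ → GammaR := fun p => Ideal.Quotient.mk IGam (cFree p)

/-- The elementary symmetric polynomial `e_j` evaluated at the family `v i`,
`i ∈ s`. -/
def esymF {R : Type*} [CommRing R] {σ : Type*} [DecidableEq σ]
    (s : Finset σ) (v : σ → R) (j : ℕ) : R :=
  ∑ t ∈ Finset.powersetCard j s, ∏ i ∈ t, v i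

/-- The complete homogeneous symmetric polynomial `h_j` evaluated at the family
`v i`, `i ∈ s`. -/
def hsymF {R : Type*} [CommRing R] {σ : Type*} [DecidableEq σ]
    (s : Finset σ) (v : σ → R) (j : ℕ) : R :=
  ∑ m ∈ Finset.sym s j, (m.1.map v).prod

/-- `ⁿc_p = ∑_{j=0}^p c_{p-j} e_j(X_n)` in `Γ[x_1,…,x_n]`. -/
def nc (n p : ℕ) : MvPolynomial (Fin n) GammaR :=
  ∑ j ∈ Finset.range (p + 1),
    C (cQ ((p : ℤ) - j)) * esymF Finset.univ X j

section Aux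

variable {R : Type*} [CommRing R] {σ : Type*} [DecidableEq σ]

lemma neg_one_pow_mod (a : ℕ) : (-1:R)^a = (-1)^(a % 2) := by
  conv_lhs => rw [← Nat.div_add_mod a 2]
  rw [pow_add, pow_mul, neg_one_sq, one_pow, one_mul]

lemma neg_one_pow_congr' {a b : ℕ} (h : a % 2 = b % 2) : (-1:R)^a = (-1)^b := by
  rw [neg_one_pow_mod, h, ← neg_one_pow_mod]

lemma sym_antidiag (d : ℕ → R) (q : ℕ) :
    ∑ uv ∈ Finset.HasAntidiagonal.antidiagonal (2*q), (-1:R)^uv.2 * d uv.1 * d uv.2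
      = (-1)^q * (d q ^ 2 + 2 * ∑ i ∈ Finset.Icc 1 q, (-1:R)^i * d (q+i) * d (q-i)) := by
  rw [Finset.Nat.sum_antidiagonal_eq_sum_range_succ_mk]
  have hsgn : ∀ k ∈ Finset.range (2*q+1),
      (-1:R)^(2*q-k) * d k * d (2*q-k) = (-1:R)^k * d k * d (2*q-k) := by
    intro k hk
    rw [Finset.mem_range] at hk
    rw [neg_one_pow_congr' (R := R) (a := 2*q-k) (b := k) (by omega)]
  rw [Finset.sum_congr rfl hsgn]
  set f : ℕ → R := fun k => (-1:R)^k * d k * d (2*q-k) with hf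
  have hsplit : ∑ k ∈ Finset.range (2*q+1), f k
      = ∑ k ∈ Finset.Ico 0 q, f k + ∑ k ∈ Finset.Ico q (2*q+1), f k := by
    rw [Finset.sum_Ico_consecutive _ (by omega) (by omega), Finset.range_eq_Ico]
  rw [hsplit]
  rw [show Finset.Ico 0 q = Finset.range q by rw [Finset.range_eq_Ico]]
  rw [Finset.sum_Ico_eq_sum_range]
  rw [show 2*q+1-q = q+1 by omega]
  rw [Finset.sum_range_succ']
  rw [← Finset.sum_range_reflect (fun k => f k) q]
  rw [show Finset.Icc 1 q = Finset.Ico 1 (q+1) by rw [Finset.Ico_add_one_right_eq_Icc]]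
  rw [Finset.sum_Ico_eq_sum_range]
  rw [show q+1-1 = q from rfl]
  have hterm : ∀ i ∈ Finset.range q,
      f (q - 1 - i) + f (q + (i+1))
        = 2 * ((-1:R)^q * ((-1:R)^(1+i) * d (q+(1+i)) * d (q-(1+i)))) := by
    intro i hi
    rw [Finset.mem_range] at hi
    have h1 : 2*q - (q-1-i) = q+(i+1) := by omega
    have h2 : 2*q - (q+(i+1)) = q-1-i := by omega
    have h3 : q - (1+i) = q-1-i := by omega
    have h4 : q + (1+i) = q+(i+1) := by omega
    rw [hf]
    simp only [h1, h2, h3, h4]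
    rw [neg_one_pow_congr' (R := R) (a := q-1-i) (b := q+(i+1)) (by omega)]
    have h5 : (-1:R)^q * (-1:R)^(1+i) = (-1:R)^(q+(i+1)) := by
      rw [← pow_add, show q+(1+i) = q+(i+1) from by omega]
    rw [← h5]; ring
  have hmid : f (q + 0) = (-1:R)^q * d q ^ 2 := by
    rw [hf]; simp only [Nat.add_zero, show 2*q - q = q by omega]; ring
  calc ∑ i ∈ Finset.range q, f (q - 1 - i) + (∑ i ∈ Finset.range q, f (q + (i+1)) + f (q+0))
      = (∑ i ∈ Finset.range q, (f (q-1-i) + f (q+(i+1)))) + f (q+0) := by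
        rw [Finset.sum_add_distrib]; ring
    _ = (∑ i ∈ Finset.range q, 2 * ((-1:R)^q * ((-1:R)^(1+i) * d (q+(1+i)) * d (q-(1+i))))) + (-1:R)^q * d q ^2 := by
        rw [Finset.sum_congr rfl hterm, hmid]
    _ = (-1)^q * (d q ^ 2 + 2 * ∑ i ∈ Finset.range q, (-1:R)^(1+i) * d (q+(1+i)) * d (q-(1+i))) := by
        rw [mul_add, add_comm]
        congr 1
        rw [Finset.mul_sum, Finset.mul_sum]
        exact Finset.sum_congr rfl fun i _ => by ring

lemma esymF_zero (s : Finset σ) (v : σ → R) : esymF s v 0 = 1 := by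
  simp [esymF]

lemma esymF_empty (v : σ → R) (j : ℕ) : esymF ∅ v j = if j = 0 then 1 else 0 := by
  cases j with
  | zero => simp [esymF]
  | succ j => rw [esymF, Finset.powersetCard_eq_empty.mpr (by simp)]; simp

lemma esymF_insert {a : σ} {s : Finset σ} (h : a ∉ s) (v : σ → R) (j : ℕ) :
    esymF (insert a s) v (j+1) = esymF s v (j+1) + v a * esymF s v j := by
  have hdisj : Disjoint (Finset.powersetCard (j+1) s)
      ((Finset.powersetCard j s).image (insert a)) := by
    rw [Finset.disjoint_left]
    intro t ht ht'
    obtain ⟨u, hu, rfl⟩ := Finset.mem_image.mp ht'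
    have hts := (Finset.mem_powersetCard.mp ht).1
    exact h (hts (Finset.mem_insert_self a u))
  rw [esymF, Finset.powersetCard_succ_insert h, Finset.sum_union hdisj]
  congr 1
  rw [Finset.sum_image]
  · rw [esymF, Finset.mul_sum]
    refine Finset.sum_congr rfl fun t ht => ?_
    have hat : a ∉ t := fun hc => h ((Finset.mem_powersetCard.mp ht).1 hc)
    rw [Finset.prod_insert hat]
  · intro x hx y hy hxy
    have hax : a ∉ x := fun hc => h ((Finset.mem_powersetCard.mp hx).1 hc)
    have hay : a ∉ y := fun hc => h ((Finset.mem_powersetCard.mp hy).1 hc)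
    rw [← Finset.erase_insert hax, ← Finset.erase_insert hay, hxy]

lemma coeff_prod_one_add (s : Finset σ) (v : σ → R) (j : ℕ) :
    (∏ i ∈ s, (1 + Polynomial.C (v i) * Polynomial.X)).coeff j = esymF s v j := by
  induction s using Finset.induction_on generalizing j with
  | empty =>
    rw [Finset.prod_empty, esymF_empty, Polynomial.coeff_one]
  | @insert a s ha ih =>
    rw [Finset.prod_insert ha, add_mul, one_mul, mul_assoc]
    cases j with
    | zero =>
      rw [Polynomial.coeff_add, Polynomial.coeff_C_mul, Polynomial.mul_coeff_zero,
        Polynomial.coeff_X_zero, zero_mul, mul_zero, add_zero, ih, esymF_zero, esymF_zero]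
    | succ j =>
      rw [Polynomial.coeff_add, Polynomial.coeff_C_mul, Polynomial.coeff_X_mul, ih, ih,
        esymF_insert ha]

lemma esymF_neg (s : Finset σ) (v : σ → R) (k : ℕ) :
    esymF s (fun i => -v i) k = (-1:R)^k * esymF s v k := by
  rw [esymF, esymF, Finset.mul_sum]
  refine Finset.sum_congr rfl fun t ht => ?_
  have hc : t.card = k := (Finset.mem_powersetCard.mp ht).2
  calc ∏ i ∈ t, -v i = ∏ i ∈ t, (-1) * v i := by simp [neg_one_mul]
    _ = ((-1:R)^t.card) * ∏ i ∈ t, v i := by rw [Finset.prod_mul_distrib, Finset.prod_const]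
    _ = _ := by rw [hc]

lemma esymF_product (s : Finset σ) (v : σ → R) (p : ℕ) :
    ∑ jk ∈ Finset.HasAntidiagonal.antidiagonal (2*p), (-1:R)^jk.2 * (esymF s v jk.1 * esymF s v jk.2)
      = (-1:R)^p * esymF s (fun i => v i ^ 2) p := by
  have hPP : (∏ i ∈ s, (1 + Polynomial.C (v i) * Polynomial.X)) *
        (∏ i ∈ s, (1 + Polynomial.C (-v i) * Polynomial.X)) =
      Polynomial.expand R 2 (∏ i ∈ s, (1 + Polynomial.C (-(v i ^ 2)) * Polynomial.X)) := by
    rw [← Finset.prod_mul_distrib, map_prod]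
    refine Finset.prod_congr rfl fun i _ => ?_
    rw [map_add, map_mul, Polynomial.expand_C, Polynomial.expand_X, map_one, map_neg, map_neg,
      map_pow]
    ring
  have h1 := congrArg (fun P => Polynomial.coeff P (2*p)) hPP
  rw [Polynomial.coeff_mul] at h1
  rw [Polynomial.coeff_expand (by norm_num : 0 < 2)] at h1
  rw [if_pos ⟨p, rfl⟩] at h1
  rw [show 2*p/2 = p from by omega] at h1
  have hco2 : (∏ i ∈ s, (1 + Polynomial.C (-(v i ^ 2)) * Polynomial.X)).coeff p
      = (-1:R)^p * esymF s (fun i => v i ^ 2) p := by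
    rw [← esymF_neg]
    exact coeff_prod_one_add s (fun i => -(v i ^ 2)) p
  rw [hco2] at h1
  rw [← h1]
  have hco : ∀ k, (∏ i ∈ s, (1 + Polynomial.C (-v i) * Polynomial.X)).coeff k
      = (-1:R)^k * esymF s v k := by
    intro k
    rw [← esymF_neg]
    exact coeff_prod_one_add s (fun i => -v i) k
  refine Finset.sum_congr rfl fun jk _ => ?_
  rw [coeff_prod_one_add, hco]
  ring

lemma coeff_truncSum (a : ℕ → R) (N k : ℕ) (hk : k ≤ N) :
    (∑ u ∈ Finset.range (N+1), Polynomial.C (a u) * Polynomial.X^u).coeff k = a k := by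
  rw [Polynomial.finset_sum_coeff]
  rw [Finset.sum_eq_single k]
  · rw [Polynomial.coeff_C_mul, Polynomial.coeff_X_pow, if_pos rfl, mul_one]
  · intro u hu hne
    rw [Polynomial.coeff_C_mul, Polynomial.coeff_X_pow, if_neg (by omega : ¬ k = u), mul_zero]
  · intro h; exact absurd (Finset.mem_range.mpr (by omega)) h

end Aux

lemma cQ_zero : cQ 0 = 1 := by
  rw [cQ, show cFree 0 = 1 by simp [cFree], map_one]

lemma gamma_sum (m : ℕ) (hm : 1 ≤ m) :
    ∑ uv ∈ Finset.HasAntidiagonal.antidiagonal m, (-1:GammaR)^uv.2 * cQ uv.1 * cQ uv.2 = 0 := by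
  rcases Nat.even_or_odd m with hev | hodd
  · obtain ⟨q, hq⟩ := hev
    obtain rfl : m = 2*q := by omega
    have hq1 : 1 ≤ q := by omega
    have hsym := sym_antidiag (fun k : ℕ => cQ (k:ℤ)) q
    rw [hsym]
    have hrel : (Ideal.Quotient.mk IGam) (relC q) = 0 :=
      Ideal.Quotient.eq_zero_iff_mem.mpr (Ideal.subset_span ⟨q, hq1, rfl⟩)
    rw [relC] at hrel
    simp only [map_add, map_pow, map_mul, map_sum, map_ofNat, map_neg, map_one] at hrel
    have hconv : ∀ i ∈ Finset.Icc 1 q,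
        (-1:GammaR)^i * cQ (((q+i : ℕ)):ℤ) * cQ (((q-i : ℕ)):ℤ)
          = (-1:GammaR)^i * Ideal.Quotient.mk IGam (cFree ((q:ℤ)+i))
              * Ideal.Quotient.mk IGam (cFree ((q:ℤ)-i)) := by
      intro i hi
      obtain ⟨h1, h2⟩ := Finset.mem_Icc.mp hi
      rw [show (((q+i : ℕ)):ℤ) = (q:ℤ)+i by omega, show (((q-i : ℕ)):ℤ) = (q:ℤ)-i by omega]
      rfl
    rw [Finset.sum_congr rfl hconv]
    rw [show (cQ ((q:ℕ):ℤ)) = Ideal.Quotient.mk IGam (cFree ((q:ℕ):ℤ)) from rfl]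
    rw [hrel, mul_zero]
  · refine Finset.sum_involution (fun uv _ => uv.swap) ?_ ?_ ?_ ?_
    · intro uv huv
      have h12 := Finset.HasAntidiagonal.mem_antidiagonal.mp huv
      have hmod : m % 2 = 1 := Nat.odd_iff.mp hodd
      have hpar : (-1:GammaR)^uv.1 = -(-1:GammaR)^uv.2 := by
        rw [neg_one_pow_mod (R := GammaR) uv.1, neg_one_pow_mod (R := GammaR) uv.2]
        rcases Nat.even_or_odd uv.1 with h1 | h1
        · rw [Nat.even_iff] at h1
          rw [h1, show uv.2 % 2 = 1 by omega]; norm_num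
        · rw [Nat.odd_iff] at h1
          rw [h1, show uv.2 % 2 = 0 by omega]; norm_num
      show (-1:GammaR)^uv.2 * cQ uv.1 * cQ uv.2 + (-1:GammaR)^uv.swap.2 * cQ uv.swap.1 * cQ uv.swap.2 = 0
      rw [Prod.fst_swap, Prod.snd_swap, hpar]
      ring
    · intro uv huv _
      have h12 := Finset.HasAntidiagonal.mem_antidiagonal.mp huv
      have hmod : m % 2 = 1 := Nat.odd_iff.mp hodd
      intro hc
      have : uv.2 = uv.1 := congrArg Prod.fst hc
      omega
    · intro uv huv
      have h12 := Finset.HasAntidiagonal.mem_antidiagonal.mp huv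
      rw [Finset.HasAntidiagonal.mem_antidiagonal, Prod.fst_swap, Prod.snd_swap]
      omega
    · intro uv _
      exact Prod.swap_swap uv

lemma nc_antidiag (n q : ℕ) :
    nc n q = ∑ uv ∈ Finset.HasAntidiagonal.antidiagonal q,
      C (cQ uv.1) * esymF Finset.univ (X : Fin n → MvPolynomial (Fin n) GammaR) uv.2 := by
  have h1 := Finset.Nat.sum_antidiagonal_swap (n := q)
    (f := fun uv : ℕ × ℕ => C (cQ (uv.2:ℤ)) * esymF Finset.univ (X : Fin n → MvPolynomial (Fin n) GammaR) uv.1)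
  simp only [Prod.fst_swap, Prod.snd_swap] at h1
  have h2 := Finset.Nat.sum_antidiagonal_eq_sum_range_succ_mk
    (fun uv : ℕ × ℕ => C (cQ (uv.2:ℤ)) * esymF Finset.univ (X : Fin n → MvPolynomial (Fin n) GammaR) uv.1) q
  simp only at h2
  rw [nc, h1.trans h2]
  refine Finset.sum_congr rfl fun k hk => ?_
  rw [Finset.mem_range] at hk
  rw [show (q:ℤ) - k = (((q - k : ℕ)):ℤ) by omega]

/-- `(ⁿc_p)² + 2 ∑_{i=1}^p (-1)^i (ⁿc_{p+i})(ⁿc_{p-i}) = e_p(x_1²,…,x_n²)`. -/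
theorem nc_rel (n p : ℕ) :
    nc n p ^ 2 +
        2 * ∑ i ∈ Finset.Icc 1 p,
          (-1 : MvPolynomial (Fin n) GammaR) ^ i * nc n (p + i) * nc n (p - i) =
      esymF Finset.univ (fun i : Fin n => (X i : MvPolynomial (Fin n) GammaR) ^ 2) p := by
  classical
  set Rn := MvPolynomial (Fin n) GammaR
  set e : ℕ → Rn := fun j => esymF Finset.univ X j with he
  set cc : ℕ → Rn := fun u => C (cQ u) with hccdef
  set f : Polynomial Rn := ∑ u ∈ Finset.range (2*p+1), Polynomial.C (cc u) * Polynomial.X^u with hfdef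
  set f' : Polynomial Rn := ∑ u ∈ Finset.range (2*p+1), Polynomial.C ((-1)^u * cc u) * Polynomial.X^u with hf'def
  set g : Polynomial Rn := ∑ j ∈ Finset.range (2*p+1), Polynomial.C (e j) * Polynomial.X^j with hgdef
  set g' : Polynomial Rn := ∑ j ∈ Finset.range (2*p+1), Polynomial.C ((-1)^j * e j) * Polynomial.X^j with hg'def
  have hcf : ∀ k, k ≤ 2*p → f.coeff k = cc k := fun k hk => by rw [hfdef]; exact coeff_truncSum cc _ _ hk
  have hcf' : ∀ k, k ≤ 2*p → f'.coeff k = (-1)^k * cc k := fun k hk => by rw [hf'def]; exact coeff_truncSum (fun u => (-1)^u * cc u) _ _ hk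
  have hce : ∀ k, k ≤ 2*p → g.coeff k = e k := fun k hk => by rw [hgdef]; exact coeff_truncSum e _ _ hk
  have hce' : ∀ k, k ≤ 2*p → g'.coeff k = (-1)^k * e k := fun k hk => by rw [hg'def]; exact coeff_truncSum (fun j => (-1)^j * e j) _ _ hk
  have hfg : ∀ a, a ≤ 2*p → (f*g).coeff a = nc n a := by
    intro a ha
    rw [Polynomial.coeff_mul, nc_antidiag]
    refine Finset.sum_congr rfl fun uv huv => ?_
    have h12 := Finset.HasAntidiagonal.mem_antidiagonal.mp huv
    rw [hcf uv.1 (by omega), hce uv.2 (by omega)]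
  have hf'g' : ∀ b, b ≤ 2*p → (f'*g').coeff b = (-1)^b * nc n b := by
    intro b hb
    rw [Polynomial.coeff_mul, nc_antidiag, Finset.mul_sum]
    refine Finset.sum_congr rfl fun uv huv => ?_
    have h12 := Finset.HasAntidiagonal.mem_antidiagonal.mp huv
    rw [hcf' uv.1 (by omega), hce' uv.2 (by omega)]
    have hpow : (-1:Rn)^uv.1 * (-1:Rn)^uv.2 = (-1:Rn)^b := by rw [← pow_add, h12]
    calc ((-1:Rn)^uv.1 * cc uv.1) * ((-1:Rn)^uv.2 * e uv.2)
        = ((-1:Rn)^uv.1 * (-1:Rn)^uv.2) * (cc uv.1 * e uv.2) := by ring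
      _ = (-1:Rn)^b * (cc uv.1 * e uv.2) := by rw [hpow]
  have hff' : ∀ m, m ≤ 2*p → (f*f').coeff m = if m = 0 then (1:Rn) else 0 := by
    intro m hm
    rw [Polynomial.coeff_mul]
    have hterm : ∀ uv ∈ Finset.HasAntidiagonal.antidiagonal m,
        f.coeff uv.1 * f'.coeff uv.2 = (-1:Rn)^uv.2 * cc uv.1 * cc uv.2 := by
      intro uv huv
      have h12 := Finset.HasAntidiagonal.mem_antidiagonal.mp huv
      rw [hcf uv.1 (by omega), hcf' uv.2 (by omega)]
      ring
    rw [Finset.sum_congr rfl hterm]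
    by_cases hm0 : m = 0
    · subst hm0
      rw [if_pos rfl]
      rw [show (Finset.HasAntidiagonal.antidiagonal 0 : Finset (ℕ × ℕ)) = {(0,0)} from rfl, Finset.sum_singleton]
      simp [hccdef, cQ_zero]
    · rw [if_neg hm0]
      have hgs := gamma_sum m (by omega)
      have hmap := congrArg (C : GammaR →+* Rn) hgs
      rw [map_sum, map_zero] at hmap
      rw [← hmap]
      refine Finset.sum_congr rfl fun uv _ => ?_
      rw [map_mul, map_mul, map_pow, map_neg, map_one]
  have hgg' : (g*g').coeff (2*p)
      = ∑ jk ∈ Finset.HasAntidiagonal.antidiagonal (2*p), (-1:Rn)^jk.2 * (e jk.1 * e jk.2) := by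
    rw [Polynomial.coeff_mul]
    refine Finset.sum_congr rfl fun jk hjk => ?_
    have h12 := Finset.HasAntidiagonal.mem_antidiagonal.mp hjk
    rw [hce jk.1 (by omega), hce' jk.2 (by omega)]
    ring
  have hmain : ∑ uv ∈ Finset.HasAntidiagonal.antidiagonal (2*p), (-1:Rn)^uv.2 * nc n uv.1 * nc n uv.2
      = (-1:Rn)^p * esymF Finset.univ (fun i : Fin n => (X i : Rn) ^ 2) p := by
    have s1 : ∑ uv ∈ Finset.HasAntidiagonal.antidiagonal (2*p), (-1:Rn)^uv.2 * nc n uv.1 * nc n uv.2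
        = ((f*g)*(f'*g')).coeff (2*p) := by
      rw [Polynomial.coeff_mul]
      refine Finset.sum_congr rfl fun uv huv => ?_
      have h12 := Finset.HasAntidiagonal.mem_antidiagonal.mp huv
      rw [hfg uv.1 (by omega), hf'g' uv.2 (by omega)]
      ring
    have s2 : (f*g)*(f'*g') = (f*f')*(g*g') := by ring
    have s3 : ((f*f')*(g*g')).coeff (2*p) = (g*g').coeff (2*p) := by
      rw [Polynomial.coeff_mul]
      rw [Finset.sum_eq_single ((0:ℕ), 2*p)]
      · rw [hff' 0 (by omega), if_pos rfl, one_mul]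
      · intro uv huv hne
        have h12 := Finset.HasAntidiagonal.mem_antidiagonal.mp huv
        have h10 : uv.1 ≠ 0 := by
          intro h0
          exact hne (by rw [Prod.ext_iff]; constructor <;> omega)
        rw [hff' uv.1 (by omega), if_neg h10, zero_mul]
      · intro h
        exact absurd (Finset.HasAntidiagonal.mem_antidiagonal.mpr (by omega)) h
    rw [s1, s2, s3, hgg']
    exact esymF_product Finset.univ (X : Fin n → Rn) p
  have hsym := sym_antidiag (fun k : ℕ => nc n k) p
  rw [hsym] at hmain
  have hone : (-1:Rn)^p * (-1:Rn)^p = 1 := by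
    rw [← pow_add, ← two_mul, pow_mul, show (-1:Rn)^2 = 1 by ring, one_pow]
  have hfin := congrArg (fun z : Rn => (-1:Rn)^p * z) hmain
  simp only [← mul_assoc, hone, one_mul] at hfin
  exact hfin
end
end

section
/- The divided difference operators satisfy: for $k, p, r \in \mathbb{Z}$ and $i \geq 0$, $\partial_i^x({}^k c^r_p) = {}^{k-1} c^r_{p-1}$ if $k = \pm i$, and $\partial_i^x({}^k c^r_p) = 0$ otherwise. Here ${}^k c^{k'}_p := \sum_{i,j \geq 0} c_{p-i-j} h^{-k}_i(X) h^{k'}_j(-Y)$, with $h^r_j := h_j$ in the first $r$ variables for $r \geq 0$ and $h^r_j := e_j$ in the first $-r$ variables for $r < 0$. -/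
noncomputable section
open MvPolynomial

/-- The ring `Γ[X, Y]` in infinitely many variables `x_1, x_2, …` and
`y_1, y_2, …` (the index `0` variables are unused). -/
abbrev SR := MvPolynomial (ℕ ⊕ ℕ) GammaR

/-- The variable `x_k`. -/
def xx (k : ℕ) : SR := X (Sum.inl k)

/-- The variable `y_k`. -/
def yy (k : ℕ) : SR := X (Sum.inr k)

/-- `h^r_j` evaluated at a family `v`: the complete homogeneous symmetric
polynomial `h_j` in `v_1, …, v_r` for `r ≥ 0`, and the elementary symmetric
polynomial `e_j` in `v_1, …, v_{-r}` for `r < 0` (so `h^0_j = δ_{0j}`). -/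
def hkv (v : ℕ → SR) (r : ℤ) (j : ℕ) : SR :=
  if 0 ≤ r then hsymF (Finset.Icc 1 r.toNat) v j
  else esymF (Finset.Icc 1 (-r).toNat) v j

/-- `ᵏc^{k'}_p = ∑_{i,j ≥ 0} c_{p-i-j} h^{-k}_i(X) h^{k'}_j(-Y)`. -/
def kc (k k' p : ℤ) : SR :=
  ∑ i ∈ Finset.range (p.toNat + 1), ∑ j ∈ Finset.range (p.toNat + 1),
    C (cQ (p - i - j)) * hkv xx (-k) i * hkv (fun t => -(yy t)) k' j

namespace DDAux
variable {R : Type*} [CommRing R] {σ : Type*} [DecidableEq σ]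

lemma hsymF_zero (s : Finset σ) (v : σ → R) : hsymF s v 0 = 1 := by
  have : ((∅ : Sym σ 0) : Multiset σ) = 0 := rfl
  simp [hsymF, this]

lemma hsymF_empty_succ (v : σ → R) (j : ℕ) : hsymF (∅ : Finset σ) v (j+1) = 0 := by
  simp [hsymF]

lemma esymF_zero (s : Finset σ) (v : σ → R) : esymF s v 0 = 1 := by
  simp [esymF]

lemma esymF_empty_succ (v : σ → R) (j : ℕ) : esymF (∅ : Finset σ) v (j+1) = 0 := by
  rw [esymF, Finset.powersetCard_eq_empty.2 (by simp), Finset.sum_empty]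

lemma esymF_insert (a : σ) (s : Finset σ) (ha : a ∉ s) (v : σ → R) (j : ℕ) :
    esymF (insert a s) v (j+1) = esymF s v (j+1) + v a * esymF s v j := by
  classical
  unfold esymF
  rw [Finset.powersetCard_succ_insert ha]
  rw [Finset.sum_union]
  · congr 1
    rw [Finset.sum_image, Finset.mul_sum]
    · apply Finset.sum_congr rfl
      intro t ht
      have hat : a ∉ t := fun h => ha ((Finset.mem_powersetCard.1 ht).1 h)
      rw [Finset.prod_insert hat]
    · intro t ht u hu h
      have hat : a ∉ t := fun hh => ha ((Finset.mem_powersetCard.1 ht).1 hh)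
      have hau : a ∉ u := fun hh => ha ((Finset.mem_powersetCard.1 hu).1 hh)
      rw [← Finset.erase_insert hat, ← Finset.erase_insert hau, h]
  · rw [Finset.disjoint_left]
    intro t ht ht'
    have hat : a ∉ t := fun hh => ha ((Finset.mem_powersetCard.1 ht).1 hh)
    obtain ⟨u, _, rfl⟩ := Finset.mem_image.1 ht'
    exact hat (Finset.mem_insert_self a u)

lemma hsymF_insert (a : σ) (s : Finset σ) (ha : a ∉ s) (v : σ → R) (j : ℕ) :
    hsymF (insert a s) v (j+1) = hsymF s v (j+1) + v a * hsymF (insert a s) v j := by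
  classical
  unfold hsymF
  have key : (insert a s).sym (j+1)
      = s.sym (j+1) ∪ ((insert a s).sym j).image (Sym.cons a) := by
    ext m
    simp only [Finset.mem_union, Finset.mem_image, Finset.mem_sym_iff, Finset.mem_insert]
    constructor
    · intro h
      by_cases ham : a ∈ m
      · right
        refine ⟨m.erase a ham, ?_, Sym.cons_erase ham⟩
        intro b hb
        have hbm : b ∈ m := by
          have : (m.erase a ham : Multiset σ) ≤ (m : Multiset σ) := by
            have : (m.erase a ham : Multiset σ) = (m : Multiset σ).erase a := rfl
            rw [this]; exact Multiset.erase_le a m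
          exact Multiset.mem_of_le this hb
        exact h b hbm
      · left
        intro b hb
        rcases h b hb with rfl | hbs
        · exact absurd hb ham
        · exact hbs
    · rintro (h | ⟨m', hm', rfl⟩)
      · intro b hb; exact Or.inr (h b hb)
      · intro b hb
        rw [Sym.mem_cons] at hb
        rcases hb with rfl | hb
        · exact Or.inl rfl
        · exact hm' b hb
  rw [key, Finset.sum_union, Finset.sum_image]
  · congr 1
    rw [Finset.mul_sum]
    apply Finset.sum_congr rfl
    intro m _
    have hc : (a ::ₛ m).val = a ::ₘ m.val := rfl
    rw [hc, Multiset.map_cons, Multiset.prod_cons]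
  · intro t _ u _ h
    exact (Sym.cons_inj_right a t u).1 h
  · rw [Finset.disjoint_left]
    intro m hm hm'
    obtain ⟨m', _, rfl⟩ := Finset.mem_image.1 hm'
    have : a ∈ s := Finset.mem_sym_iff.1 hm a (Sym.mem_cons_self a m')
    exact ha this

lemma hsymF_congr (s : Finset σ) {v w : σ → R} (h : ∀ i ∈ s, v i = w i) (j : ℕ) :
    hsymF s v j = hsymF s w j := by
  unfold hsymF
  refine Finset.sum_congr rfl fun m hm => ?_
  congr 1
  refine Multiset.map_congr rfl fun b hb => ?_
  exact h b (Finset.mem_sym_iff.1 hm b hb)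

lemma esymF_congr (s : Finset σ) {v w : σ → R} (h : ∀ i ∈ s, v i = w i) (j : ℕ) :
    esymF s v j = esymF s w j := by
  unfold esymF
  refine Finset.sum_congr rfl fun t ht => Finset.prod_congr rfl fun b hb => ?_
  exact h b ((Finset.mem_powersetCard.1 ht).1 hb)

lemma map_hsymF {S : Type*} [CommRing S] (φ : R →+* S) (s : Finset σ) (v : σ → R) (j : ℕ) :
    φ (hsymF s v j) = hsymF s (fun i => φ (v i)) j := by
  unfold hsymF
  rw [map_sum]
  refine Finset.sum_congr rfl fun m _ => ?_
  rw [← Multiset.prod_hom _ φ, Multiset.map_map]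
  rfl

lemma map_esymF {S : Type*} [CommRing S] (φ : R →+* S) (s : Finset σ) (v : σ → R) (j : ℕ) :
    φ (esymF s v j) = esymF s (fun i => φ (v i)) j := by
  unfold esymF
  rw [map_sum]
  exact Finset.sum_congr rfl fun t _ => map_prod φ _ _

lemma esymF_flip {a b : σ} {s : Finset σ} (ha : a ∉ s) (hb : b ∉ s) {v w : σ → R}
    (hab : v a = w b) (hvw : ∀ i ∈ s, v i = w i) (j : ℕ) :
    esymF (insert a s) v j = esymF (insert b s) w j := by
  cases j with
  | zero => rw [esymF_zero, esymF_zero]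
  | succ j =>
    rw [esymF_insert a s ha, esymF_insert b s hb, esymF_congr s hvw (j+1),
      esymF_congr s hvw j, hab]

lemma hsymF_flip {a b : σ} {s : Finset σ} (ha : a ∉ s) (hb : b ∉ s) {v w : σ → R}
    (hab : v a = w b) (hvw : ∀ i ∈ s, v i = w i) :
    ∀ j, hsymF (insert a s) v j = hsymF (insert b s) w j := by
  intro j
  induction j with
  | zero => rw [hsymF_zero, hsymF_zero]
  | succ j ih =>
    rw [hsymF_insert a s ha, hsymF_insert b s hb, hsymF_congr s hvw (j+1), ih, hab]

lemma hsymF_swap {a b : σ} {T : Finset σ} (hab : a ≠ b) (ha : a ∉ T) (hb : b ∉ T)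
    {v w : σ → R} (h1 : v a = w b) (h2 : v b = w a) (h3 : ∀ i ∈ T, v i = w i) :
    ∀ j, hsymF (insert a (insert b T)) v j = hsymF (insert a (insert b T)) w j := by
  intro j
  induction j with
  | zero => rw [hsymF_zero, hsymF_zero]
  | succ j ih =>
    have hA : a ∉ insert b T := by simp [hab, ha]
    have hB : b ∉ insert a T := by simp [Ne.symm hab, hb]
    have hcomm : insert a (insert b T) = insert b (insert a T) := Finset.insert_comm a b T
    rw [hsymF_insert a _ hA]
    conv_rhs => rw [hcomm, hsymF_insert b _ hB, ← hcomm]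
    rw [hsymF_flip hb ha h2 h3 (j+1), ih, h1]

lemma esymF_swap {a b : σ} {T : Finset σ} (hab : a ≠ b) (ha : a ∉ T) (hb : b ∉ T)
    {v w : σ → R} (h1 : v a = w b) (h2 : v b = w a) (h3 : ∀ i ∈ T, v i = w i) (j : ℕ) :
    esymF (insert a (insert b T)) v j = esymF (insert a (insert b T)) w j := by
  cases j with
  | zero => rw [esymF_zero, esymF_zero]
  | succ j =>
    have hA : a ∉ insert b T := by simp [hab, ha]
    have hB : b ∉ insert a T := by simp [Ne.symm hab, hb]
    have hcomm : insert a (insert b T) = insert b (insert a T) := Finset.insert_comm a b T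
    rw [esymF_insert a _ hA]
    conv_rhs => rw [hcomm, esymF_insert b _ hB]
    rw [esymF_flip hb ha h2 h3 (j+1), esymF_flip hb ha h2 h3 j, h1]

end DDAux

namespace DDAux

/-! ### Basic facts about `cQ` -/

lemma cQ_neg {n : ℤ} (h : n < 0) : cQ n = 0 := by
  unfold cQ cFree
  rw [if_pos h.le, if_neg h.ne]
  simp

lemma cQ_zero : cQ 0 = 1 := by
  unfold cQ cFree
  norm_num

/-- Abbreviation for the constants `c_n` inside `SR`. -/
def cc (n : ℤ) : SR := C (cQ n)

lemma cc_neg {n : ℤ} (h : n < 0) : cc n = 0 := by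
  rw [cc, cQ_neg h, map_zero]

lemma cc_zero : cc 0 = 1 := by
  rw [cc, cQ_zero, map_one]

lemma map_cc_nonpos (φ : SR →+* SR) {n : ℤ} (h : n ≤ 0) : φ (cc n) = cc n := by
  rcases lt_or_eq_of_le h with h' | h'
  · rw [cc_neg h', map_zero]
  · subst h'; rw [cc_zero, map_one]

lemma sum_range_vanish (g : ℕ → SR) (T : ℕ) (hg : ∀ m, T ≤ m → g m = 0)
    {M M' : ℕ} (hM : T ≤ M) (hM' : T ≤ M') :
    ∑ m ∈ Finset.range M, g m = ∑ m ∈ Finset.range M', g m := by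
  have e : ∀ K : ℕ, T ≤ K → ∑ m ∈ Finset.range K, g m = ∑ m ∈ Finset.range T, g m := by
    intro K hK
    rw [← Finset.sum_subset (Finset.range_subset_range.2 hK)]
    intro x _ hx'
    exact hg x (by simpa using hx')
  rw [e M hM, e M' hM']

/-! ### `hkv` special forms -/

lemma hkv_nonneg (v : ℕ → SR) (n : ℕ) (j : ℕ) :
    hkv v (n : ℤ) j = hsymF (Finset.Icc 1 n) v j := by
  unfold hkv
  rw [if_pos (Int.natCast_nonneg n), Int.toNat_natCast]

lemma hkv_negcast (v : ℕ → SR) (n : ℕ) (hn : 1 ≤ n) (j : ℕ) :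
    hkv v (-(n : ℤ)) j = esymF (Finset.Icc 1 n) v j := by
  unfold hkv
  rw [if_neg (by omega), neg_neg, Int.toNat_natCast]

lemma hkv_zero_j (v : ℕ → SR) (r : ℤ) : hkv v r 0 = 1 := by
  unfold hkv
  split <;> [rw [hsymF_zero]; rw [esymF_zero]]

lemma hsymF_eq_esymF_empty (v : ℕ → SR) (j : ℕ) :
    hsymF (∅ : Finset ℕ) v j = esymF (∅ : Finset ℕ) v j := by
  cases j with
  | zero => rw [hsymF_zero, esymF_zero]
  | succ j => rw [hsymF_empty_succ, esymF_empty_succ]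

lemma Icc_one_insert (n : ℕ) : Finset.Icc 1 (n+1) = insert (n+1) (Finset.Icc 1 n) := by
  ext x
  simp only [Finset.mem_Icc, Finset.mem_insert]
  omega

lemma not_mem_Icc_succ (n : ℕ) : (n+1) ∉ Finset.Icc 1 n := by
  simp

lemma hsymF_singleton (v : ℕ → SR) (a : ℕ) (m : ℕ) :
    hsymF ({a} : Finset ℕ) v m = v a ^ m := by
  induction m with
  | zero => rw [hsymF_zero, pow_zero]
  | succ m ih =>
    have h : ({a} : Finset ℕ) = insert a ∅ := rfl
    rw [h] at ih ⊢
    rw [hsymF_insert a ∅ (Finset.notMem_empty a) v m, hsymF_empty_succ, ih, zero_add,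
      pow_succ]
    ring

end DDAux

namespace DDAux

section Phi
variable (φ : SR →+* SR)

/-- Reformulation of the hypothesis on `s 0 (c_p)` for all integers. -/
lemma s0c_int
    (h0c : ∀ p : ℕ, 1 ≤ p →
      φ (C (cQ (p : ℤ))) =
        C (cQ (p : ℤ)) + 2 * ∑ m ∈ Finset.Icc 1 p, xx 1 ^ m * C (cQ ((p : ℤ) - m)))
    (q : ℤ) :
    φ (cc q) = cc q + 2 * ∑ m ∈ Finset.range q.toNat, xx 1 ^ (m+1) * cc (q - 1 - m) := by
  rcases le_or_gt q 0 with hq | hq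
  · rw [Int.toNat_of_nonpos hq, Finset.range_zero, Finset.sum_empty, mul_zero, add_zero,
      map_cc_nonpos φ hq]
  · obtain ⟨p, rfl⟩ : ∃ p : ℕ, q = (p : ℤ) := ⟨q.toNat, (Int.toNat_of_nonneg hq.le).symm⟩
    have h1 : 1 ≤ p := by exact_mod_cast hq
    show φ (C (cQ (p:ℤ))) = _
    rw [h0c p h1]
    have : (((p):ℤ)).toNat = p := Int.toNat_natCast p
    rw [this]
    congr 1
    congr 1
    rw [← Finset.Ico_add_one_right_eq_Icc, Finset.sum_Ico_eq_sum_range]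
    have hr : p + 1 - 1 = p := rfl
    rw [hr]
    apply Finset.sum_congr rfl
    intro m _
    have h2 : ((p:ℤ)) - (↑(1 + m) : ℤ) = (p:ℤ) - 1 - (m:ℤ) := by push_cast; ring
    rw [h2, add_comm 1 m]
    rfl

lemma starstar
    (hsc : ∀ q : ℤ, φ (cc q) = cc q + 2 * ∑ m ∈ Finset.range q.toNat, xx 1 ^ (m+1) * cc (q - 1 - m))
    (q : ℤ) :
    φ (cc q) - xx 1 * φ (cc (q-1)) = cc q + xx 1 * cc (q-1) := by
  rcases le_or_gt q 0 with hq | hq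
  · rw [map_cc_nonpos φ hq, map_cc_nonpos φ (by omega : q - 1 ≤ 0), cc_neg (by omega : q - 1 < 0)]
    ring
  · have ht : q.toNat = (q-1).toNat + 1 := by omega
    rw [hsc q, hsc (q-1), ht, Finset.sum_range_succ']
    have e1 : ∑ m ∈ Finset.range (q-1).toNat, xx 1 ^ (m+1+1) * cc (q - 1 - ↑(m+1))
        = xx 1 * ∑ m ∈ Finset.range (q-1).toNat, xx 1 ^ (m+1) * cc (q - 1 - 1 - m) := by
      rw [Finset.mul_sum]
      apply Finset.sum_congr rfl
      intro m _
      have : q - 1 - (↑(m+1) : ℤ) = q - 1 - 1 - m := by push_cast; ring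
      rw [this]; ring
    rw [e1]
    simp only [Nat.cast_zero, sub_zero, pow_one]
    ring

lemma star (hx1 : φ (xx 1) = -(xx 1))
    (hsc : ∀ q : ℤ, φ (cc q) = cc q + 2 * ∑ m ∈ Finset.range q.toNat, xx 1 ^ (m+1) * cc (q - 1 - m)) :
    ∀ d : ℕ, ∀ q : ℤ, q.toNat ≤ d →
      ∑ m ∈ Finset.range (d+1), φ (cc (q - m)) * (-(xx 1)) ^ m
        = ∑ m ∈ Finset.range (d+1), cc (q - m) * xx 1 ^ m := by
  intro d
  induction d with
  | zero =>
    intro q hq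
    rw [Finset.sum_range_one, Finset.sum_range_one]
    simp only [Nat.cast_zero, sub_zero, pow_zero, mul_one]
    exact map_cc_nonpos φ (by omega)
  | succ d ih =>
    intro q hq
    rcases le_or_gt q 0 with hq0 | hq0
    · apply Finset.sum_congr rfl
      intro m _
      rcases Nat.eq_zero_or_pos m with rfl | hm
      · simp only [Nat.cast_zero, sub_zero, pow_zero, mul_one]
        exact map_cc_nonpos φ hq0
      · rw [cc_neg (by omega), map_zero, zero_mul, zero_mul]
    · rw [Finset.sum_range_succ' (fun m => φ (cc (q - ↑m)) * (-(xx 1)) ^ m) (d+1),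
        Finset.sum_range_succ' (fun m => cc (q - ↑m) * xx 1 ^ m) (d+1)]
      have harg : ∀ m : ℕ, q - (↑(m+1):ℤ) = q - 1 - m := fun m => by push_cast; ring
      have e1 : ∑ m ∈ Finset.range (d+1), φ (cc (q - ↑(m+1))) * (-(xx 1))^(m+1)
          = -(xx 1) * ∑ m ∈ Finset.range (d+1), φ (cc (q - 1 - m)) * (-(xx 1))^m := by
        rw [Finset.mul_sum]
        apply Finset.sum_congr rfl
        intro m _
        rw [harg m]; ring
      have e2 : ∑ m ∈ Finset.range (d+1), cc (q - ↑(m+1)) * (xx 1)^(m+1)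
          = xx 1 * ∑ m ∈ Finset.range (d+1), cc (q - 1 - m) * xx 1 ^ m := by
        rw [Finset.mul_sum]
        apply Finset.sum_congr rfl
        intro m _
        rw [harg m]; ring
      rw [e1, e2, ih (q-1) (by omega)]
      simp only [Nat.cast_zero, sub_zero, pow_zero, mul_one]
      rw [hsc q]
      have e3 : ∑ m ∈ Finset.range q.toNat, xx 1^(m+1) * cc (q-1-m)
          = xx 1 * ∑ m ∈ Finset.range (d+1), cc (q-1-m) * xx 1 ^ m := by
        rw [Finset.mul_sum,
          @sum_range_vanish (fun m => xx 1^(m+1) * cc (q-1-m)) q.toNat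
            (fun m hm => by
              show xx 1^(m+1) * cc (q-1-m) = 0
              rw [cc_neg (by omega), mul_zero]) q.toNat (d+1) (le_refl _) (by omega)]
        apply Finset.sum_congr rfl
        intro m _
        ring
      rw [e3]
      ring

lemma sum_fix_nonpos {q : ℤ} (hq : q ≤ 0) (X : ℕ → SR) (hX0 : X 0 = 1) (d : ℕ) :
    ∑ m ∈ Finset.range (d+1), φ (cc (q - m) * X m)
      = ∑ m ∈ Finset.range (d+1), cc (q - m) * X m := by
  apply Finset.sum_congr rfl
  intro m _
  rcases Nat.eq_zero_or_pos m with rfl | hm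
  · rcases lt_or_eq_of_le hq with h' | h'
    · rw [Nat.cast_zero, sub_zero, cc_neg h', zero_mul, map_zero]
    · subst h'
      simp [cc_zero, hX0]
  · rw [cc_neg (by omega), zero_mul, map_zero]

lemma split_sum (w : SR) (f g h : ℕ → SR)
    (h0 : f 0 = g 0) (hs : ∀ m, f (m+1) = g (m+1) + w * h m) (d : ℕ) :
    ∑ m ∈ Finset.range (d+1+1), f m
      = ∑ m ∈ Finset.range (d+1+1), g m + w * ∑ m ∈ Finset.range (d+1), h m := by
  rw [Finset.sum_range_succ' f (d+1), Finset.sum_range_succ' g (d+1), Finset.mul_sum]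
  have e : ∑ m ∈ Finset.range (d+1), f (m+1)
      = ∑ m ∈ Finset.range (d+1), (g (m+1) + w * h m) :=
    Finset.sum_congr rfl fun m _ => hs m
  rw [e, Finset.sum_add_distrib, h0]
  ring

lemma i0fix_e (hx1 : φ (xx 1) = -(xx 1)) (hx2 : ∀ j : ℕ, 2 ≤ j → φ (xx j) = xx j)
    (hsc : ∀ q : ℤ, φ (cc q) = cc q + 2 * ∑ m ∈ Finset.range q.toNat, xx 1 ^ (m+1) * cc (q - 1 - m)) :
    ∀ n : ℕ, 1 ≤ n → ∀ (d : ℕ) (q : ℤ), q.toNat ≤ d →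
      ∑ m ∈ Finset.range (d+1), φ (cc (q - m) * esymF (Finset.Icc 1 n) xx m)
        = ∑ m ∈ Finset.range (d+1), cc (q - m) * esymF (Finset.Icc 1 n) xx m := by
  intro n hn
  induction n, hn using Nat.le_induction with
  | base =>
    intro d q hq
    rcases le_or_gt q 0 with hq0 | hq0
    · exact sum_fix_nonpos φ hq0 _ (esymF_zero _ _) d
    · obtain ⟨d', rfl⟩ : ∃ d', d = d' + 1 := ⟨d - 1, by omega⟩
      have he1 : esymF (Finset.Icc 1 1) xx (0+1) = xx 1 := by
        rw [Finset.Icc_self]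
        show esymF (insert 1 ∅) xx (0+1) = xx 1
        rw [esymF_insert 1 ∅ (Finset.notMem_empty 1) xx 0, esymF_empty_succ, esymF_zero,
          zero_add, mul_one]
      have heS : ∀ m : ℕ, esymF (Finset.Icc 1 1) xx (m+1+1) = 0 := by
        intro m
        rw [Finset.Icc_self]
        show esymF (insert 1 ∅) xx ((m+1)+1) = 0
        rw [esymF_insert 1 ∅ (Finset.notMem_empty 1) xx (m+1), esymF_empty_succ,
          esymF_empty_succ, mul_zero, add_zero]
      rw [Finset.sum_range_succ' (fun m => φ (cc (q - ↑m) * esymF (Finset.Icc 1 1) xx m)) (d'+1),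
        Finset.sum_range_succ' (fun m => cc (q - ↑m) * esymF (Finset.Icc 1 1) xx m) (d'+1),
        Finset.sum_range_succ' (fun m => φ (cc (q - ↑(m+1)) * esymF (Finset.Icc 1 1) xx (m+1))) d',
        Finset.sum_range_succ' (fun m => cc (q - ↑(m+1)) * esymF (Finset.Icc 1 1) xx (m+1)) d']
      have z1 : ∑ m ∈ Finset.range d', φ (cc (q - ↑(m+1+1)) * esymF (Finset.Icc 1 1) xx (m+1+1)) = 0 :=
        Finset.sum_eq_zero fun m _ => by rw [heS m, mul_zero, map_zero]
      have z2 : ∑ m ∈ Finset.range d', cc (q - ↑(m+1+1)) * esymF (Finset.Icc 1 1) xx (m+1+1) = 0 :=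
        Finset.sum_eq_zero fun m _ => by rw [heS m, mul_zero]
      rw [z1, z2, he1, esymF_zero]
      simp only [Nat.cast_zero, Nat.cast_one, zero_add, sub_zero, mul_one]
      rw [map_mul, hx1]
      have hss := starstar φ hsc q
      linear_combination hss
  | succ n hn ih =>
    intro d q hq
    rcases le_or_gt q 0 with hq0 | hq0
    · exact sum_fix_nonpos φ hq0 _ (esymF_zero _ _) d
    · obtain ⟨d', rfl⟩ : ∃ d', d = d' + 1 := ⟨d - 1, by omega⟩
      have harg : ∀ m : ℕ, q - (↑(m+1):ℤ) = q - 1 - m := fun m => by push_cast; ring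
      have hrec : ∀ m, esymF (Finset.Icc 1 (n+1)) xx (m+1)
          = esymF (Finset.Icc 1 n) xx (m+1) + xx (n+1) * esymF (Finset.Icc 1 n) xx m := by
        intro m
        rw [Icc_one_insert n]
        exact esymF_insert _ _ (not_mem_Icc_succ n) xx m
      have hphix : φ (xx (n+1)) = xx (n+1) := hx2 _ (by omega)
      have hL : ∑ m ∈ Finset.range (d'+1+1), φ (cc (q - m) * esymF (Finset.Icc 1 (n+1)) xx m)
          = ∑ m ∈ Finset.range (d'+1+1), φ (cc (q - m) * esymF (Finset.Icc 1 n) xx m)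
            + xx (n+1) * ∑ m ∈ Finset.range (d'+1), φ (cc (q - 1 - m) * esymF (Finset.Icc 1 n) xx m) := by
        apply split_sum (xx (n+1)) _ _ _ ?h0 ?hs d'
        case h0 =>
          show φ (cc (q - (0:ℕ)) * esymF (Finset.Icc 1 (n+1)) xx 0)
              = φ (cc (q - (0:ℕ)) * esymF (Finset.Icc 1 n) xx 0)
          rw [esymF_zero, esymF_zero]
        case hs =>
          intro m
          show φ (cc (q - (↑(m+1):ℤ)) * esymF (Finset.Icc 1 (n+1)) xx (m+1))
              = φ (cc (q - (↑(m+1):ℤ)) * esymF (Finset.Icc 1 n) xx (m+1))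
                + xx (n+1) * φ (cc (q - 1 - m) * esymF (Finset.Icc 1 n) xx m)
          rw [hrec m, harg m]
          simp only [mul_add, map_add, map_mul, hphix]
          ring
      have hR : ∑ m ∈ Finset.range (d'+1+1), cc (q - m) * esymF (Finset.Icc 1 (n+1)) xx m
          = ∑ m ∈ Finset.range (d'+1+1), cc (q - m) * esymF (Finset.Icc 1 n) xx m
            + xx (n+1) * ∑ m ∈ Finset.range (d'+1), cc (q - 1 - m) * esymF (Finset.Icc 1 n) xx m := by
        apply split_sum (xx (n+1)) _ _ _ ?h0 ?hs d'
        case h0 =>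
          show cc (q - (0:ℕ)) * esymF (Finset.Icc 1 (n+1)) xx 0
              = cc (q - (0:ℕ)) * esymF (Finset.Icc 1 n) xx 0
          rw [esymF_zero, esymF_zero]
        case hs =>
          intro m
          show cc (q - (↑(m+1):ℤ)) * esymF (Finset.Icc 1 (n+1)) xx (m+1)
              = cc (q - (↑(m+1):ℤ)) * esymF (Finset.Icc 1 n) xx (m+1)
                + xx (n+1) * (cc (q - 1 - m) * esymF (Finset.Icc 1 n) xx m)
          rw [hrec m, harg m]
          ring
      rw [hL, hR, ih (d'+1) q hq, ih d' (q-1) (by omega)]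

lemma i0fix_h (hx1 : φ (xx 1) = -(xx 1)) (hx2 : ∀ j : ℕ, 2 ≤ j → φ (xx j) = xx j)
    (hsc : ∀ q : ℤ, φ (cc q) = cc q + 2 * ∑ m ∈ Finset.range q.toNat, xx 1 ^ (m+1) * cc (q - 1 - m)) :
    ∀ n : ℕ, 1 ≤ n → ∀ (d : ℕ) (q : ℤ), q.toNat ≤ d →
      ∑ m ∈ Finset.range (d+1), φ (cc (q - m) * hsymF (Finset.Icc 1 n) xx m)
        = ∑ m ∈ Finset.range (d+1), cc (q - m) * hsymF (Finset.Icc 1 n) xx m := by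
  intro n hn
  induction n, hn using Nat.le_induction with
  | base =>
    intro d q hq
    have hone : ∀ m : ℕ, hsymF (Finset.Icc 1 1) xx m = xx 1 ^ m := by
      intro m
      rw [Finset.Icc_self, hsymF_singleton]
    have eL : ∑ m ∈ Finset.range (d+1), φ (cc (q - m) * hsymF (Finset.Icc 1 1) xx m)
        = ∑ m ∈ Finset.range (d+1), φ (cc (q - m)) * (-(xx 1)) ^ m := by
      apply Finset.sum_congr rfl
      intro m _
      rw [hone m, map_mul, map_pow, hx1]
    have eR : ∑ m ∈ Finset.range (d+1), cc (q - m) * hsymF (Finset.Icc 1 1) xx m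
        = ∑ m ∈ Finset.range (d+1), cc (q - m) * xx 1 ^ m := by
      apply Finset.sum_congr rfl
      intro m _
      rw [hone m]
    rw [eL, eR]
    exact star φ hx1 hsc d q hq
  | succ n hn ih =>
    intro d
    induction d with
    | zero =>
      intro q hq
      exact sum_fix_nonpos φ (by omega) _ (hsymF_zero _ _) 0
    | succ d' ihd =>
      intro q hq
      rcases le_or_gt q 0 with hq0 | hq0
      · exact sum_fix_nonpos φ hq0 _ (hsymF_zero _ _) (d'+1)
      · have harg : ∀ m : ℕ, q - (↑(m+1):ℤ) = q - 1 - m := fun m => by push_cast; ring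
        have hrec : ∀ m, hsymF (Finset.Icc 1 (n+1)) xx (m+1)
            = hsymF (Finset.Icc 1 n) xx (m+1) + xx (n+1) * hsymF (Finset.Icc 1 (n+1)) xx m := by
          intro m
          rw [Icc_one_insert n]
          exact hsymF_insert _ _ (not_mem_Icc_succ n) xx m
        have hphix : φ (xx (n+1)) = xx (n+1) := hx2 _ (by omega)
        have hL : ∑ m ∈ Finset.range (d'+1+1), φ (cc (q - m) * hsymF (Finset.Icc 1 (n+1)) xx m)
            = ∑ m ∈ Finset.range (d'+1+1), φ (cc (q - m) * hsymF (Finset.Icc 1 n) xx m)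
              + xx (n+1) * ∑ m ∈ Finset.range (d'+1), φ (cc (q - 1 - m) * hsymF (Finset.Icc 1 (n+1)) xx m) := by
          apply split_sum (xx (n+1)) _ _ _ ?h0 ?hs d'
          case h0 =>
            show φ (cc (q - (0:ℕ)) * hsymF (Finset.Icc 1 (n+1)) xx 0)
                = φ (cc (q - (0:ℕ)) * hsymF (Finset.Icc 1 n) xx 0)
            rw [hsymF_zero, hsymF_zero]
          case hs =>
            intro m
            show φ (cc (q - (↑(m+1):ℤ)) * hsymF (Finset.Icc 1 (n+1)) xx (m+1))
                = φ (cc (q - (↑(m+1):ℤ)) * hsymF (Finset.Icc 1 n) xx (m+1))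
                  + xx (n+1) * φ (cc (q - 1 - m) * hsymF (Finset.Icc 1 (n+1)) xx m)
            rw [hrec m, harg m]
            simp only [mul_add, map_add, map_mul, hphix]
            ring
        have hR : ∑ m ∈ Finset.range (d'+1+1), cc (q - m) * hsymF (Finset.Icc 1 (n+1)) xx m
            = ∑ m ∈ Finset.range (d'+1+1), cc (q - m) * hsymF (Finset.Icc 1 n) xx m
              + xx (n+1) * ∑ m ∈ Finset.range (d'+1), cc (q - 1 - m) * hsymF (Finset.Icc 1 (n+1)) xx m := by
          apply split_sum (xx (n+1)) _ _ _ ?h0 ?hs d'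
          case h0 =>
            show cc (q - (0:ℕ)) * hsymF (Finset.Icc 1 (n+1)) xx 0
                = cc (q - (0:ℕ)) * hsymF (Finset.Icc 1 n) xx 0
            rw [hsymF_zero, hsymF_zero]
          case hs =>
            intro m
            show cc (q - (↑(m+1):ℤ)) * hsymF (Finset.Icc 1 (n+1)) xx (m+1)
                = cc (q - (↑(m+1):ℤ)) * hsymF (Finset.Icc 1 n) xx (m+1)
                  + xx (n+1) * (cc (q - 1 - m) * hsymF (Finset.Icc 1 (n+1)) xx m)
            rw [hrec m, harg m]
            ring
        rw [hL, hR, ih (d'+1) q hq, ihd (q-1) (by omega)]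


lemma map_cc_all (hcφ : ∀ p : ℕ, φ (C (cQ (p : ℤ))) = C (cQ (p : ℤ))) (n : ℤ) :
    φ (cc n) = cc n := by
  rcases le_or_gt n 0 with h | h
  · exact map_cc_nonpos φ h
  · obtain ⟨p, rfl⟩ : ∃ p : ℕ, n = (p : ℤ) := ⟨n.toNat, (Int.toNat_of_nonneg h.le).symm⟩
    exact hcφ p

lemma fix_Y (hyφ : ∀ t : ℕ, 1 ≤ t → φ (yy t) = yy t) (r : ℤ) (j : ℕ) :
    φ (hkv (fun t => -(yy t)) r j) = hkv (fun t => -(yy t)) r j := by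
  unfold hkv
  split
  · rw [map_hsymF (R := SR) (S := SR)]
    apply hsymF_congr
    intro t ht
    rw [map_neg, hyφ t (Finset.mem_Icc.1 ht).1]
  · rw [map_esymF (R := SR) (S := SR)]
    apply esymF_congr
    intro t ht
    rw [map_neg, hyφ t (Finset.mem_Icc.1 ht).1]

lemma hIcc_i {i : ℕ} (hi : 1 ≤ i) : Finset.Icc 1 i = insert i (Finset.Icc 1 (i-1)) := by
  ext x
  simp only [Finset.mem_Icc, Finset.mem_insert]
  omega

lemma hnotin_i {i : ℕ} : i ∉ Finset.Icc 1 (i-1) := by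
  simp only [Finset.mem_Icc]
  omega

lemma hnotin_i1 {i : ℕ} : (i+1) ∉ Finset.Icc 1 (i-1) := by
  simp only [Finset.mem_Icc]
  omega

section IPos
variable {i : ℕ} (hi : 1 ≤ i)
  (hxi : φ (xx i) = xx (i+1)) (hxi1 : φ (xx (i+1)) = xx i)
  (hxo : ∀ j : ℕ, 1 ≤ j → j ≠ i → j ≠ i + 1 → φ (xx j) = xx j)

include hi hxi hxi1 hxo

lemma fix_h_ne {n : ℕ} (hni : n ≠ i) (m : ℕ) :
    φ (hsymF (Finset.Icc 1 n) xx m) = hsymF (Finset.Icc 1 n) xx m := by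
  rw [map_hsymF (R := SR) (S := SR)]
  rcases lt_or_gt_of_ne hni with h | h
  · apply hsymF_congr
    intro t ht
    rw [Finset.mem_Icc] at ht
    exact hxo t ht.1 (by omega) (by omega)
  · have hset : Finset.Icc 1 n = insert i (insert (i+1) (Finset.Icc 1 n \ {i, i+1})) := by
      ext x
      simp only [Finset.mem_Icc, Finset.mem_insert, Finset.mem_sdiff, Finset.mem_singleton]
      omega
    have hiT : i ∉ Finset.Icc 1 n \ {i, i+1} := by simp
    have hi1T : (i+1) ∉ Finset.Icc 1 n \ {i, i+1} := by simp
    rw [hset]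
    apply hsymF_swap (by omega) hiT hi1T hxi hxi1
    intro t ht
    simp only [Finset.mem_sdiff, Finset.mem_Icc, Finset.mem_insert, Finset.mem_singleton] at ht
    exact hxo t ht.1.1 (by omega) (by omega)

lemma fix_e_ne {n : ℕ} (hni : n ≠ i) (m : ℕ) :
    φ (esymF (Finset.Icc 1 n) xx m) = esymF (Finset.Icc 1 n) xx m := by
  rw [map_esymF (R := SR) (S := SR)]
  rcases lt_or_gt_of_ne hni with h | h
  · apply esymF_congr
    intro t ht
    rw [Finset.mem_Icc] at ht
    exact hxo t ht.1 (by omega) (by omega)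
  · have hset : Finset.Icc 1 n = insert i (insert (i+1) (Finset.Icc 1 n \ {i, i+1})) := by
      ext x
      simp only [Finset.mem_Icc, Finset.mem_insert, Finset.mem_sdiff, Finset.mem_singleton]
      omega
    have hiT : i ∉ Finset.Icc 1 n \ {i, i+1} := by simp
    have hi1T : (i+1) ∉ Finset.Icc 1 n \ {i, i+1} := by simp
    rw [hset]
    apply esymF_swap (by omega) hiT hi1T hxi hxi1
    intro t ht
    simp only [Finset.mem_sdiff, Finset.mem_Icc, Finset.mem_insert, Finset.mem_singleton] at ht
    exact hxo t ht.1.1 (by omega) (by omega)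

lemma diff_e (m : ℕ) :
    esymF (Finset.Icc 1 i) xx (m+1) - φ (esymF (Finset.Icc 1 i) xx (m+1))
      = (xx i - xx (i+1)) * esymF (Finset.Icc 1 (i-1)) xx m := by
  rw [map_esymF (R := SR) (S := SR), hIcc_i hi, esymF_insert i _ hnotin_i xx m, esymF_insert i _ hnotin_i _ m]
  have h1 : ∀ l, esymF (Finset.Icc 1 (i-1)) (fun t => φ (xx t)) l
      = esymF (Finset.Icc 1 (i-1)) xx l := by
    intro l
    apply esymF_congr
    intro t ht
    rw [Finset.mem_Icc] at ht
    exact hxo t ht.1 (by omega) (by omega)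
  rw [h1, h1, hxi]
  ring

lemma diff_h (m : ℕ) :
    hsymF (Finset.Icc 1 i) xx (m+1) - φ (hsymF (Finset.Icc 1 i) xx (m+1))
      = (xx i - xx (i+1)) * hsymF (Finset.Icc 1 (i+1)) xx m := by
  have hS : i ∉ Finset.Icc 1 (i-1) := hnotin_i
  have hS1 : (i+1) ∉ Finset.Icc 1 (i-1) := hnotin_i1
  have hflip : φ (hsymF (Finset.Icc 1 i) xx (m+1))
      = hsymF (insert (i+1) (Finset.Icc 1 (i-1))) xx (m+1) := by
    rw [map_hsymF (R := SR) (S := SR), hIcc_i hi]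
    apply hsymF_flip hS hS1 hxi
    intro t ht
    rw [Finset.mem_Icc] at ht
    exact hxo t ht.1 (by omega) (by omega)
  have hA1 : Finset.Icc 1 (i+1) = insert (i+1) (insert i (Finset.Icc 1 (i-1))) := by
    ext x
    simp only [Finset.mem_Icc, Finset.mem_insert]
    omega
  have hA2 : Finset.Icc 1 (i+1) = insert i (insert (i+1) (Finset.Icc 1 (i-1))) := by
    rw [hA1, Finset.insert_comm]
  have hr1 : hsymF (Finset.Icc 1 (i+1)) xx (m+1)
      = hsymF (insert i (Finset.Icc 1 (i-1))) xx (m+1)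
        + xx (i+1) * hsymF (Finset.Icc 1 (i+1)) xx m := by
    conv_lhs => rw [hA1]
    conv_rhs => rw [hA1]
    exact hsymF_insert (i+1) _ (by simp only [Finset.mem_insert, Finset.mem_Icc]; omega) xx m
  have hr2 : hsymF (Finset.Icc 1 (i+1)) xx (m+1)
      = hsymF (insert (i+1) (Finset.Icc 1 (i-1))) xx (m+1)
        + xx i * hsymF (Finset.Icc 1 (i+1)) xx m := by
    conv_lhs => rw [hA2]
    conv_rhs => rw [hA2]
    exact hsymF_insert i _ (by simp only [Finset.mem_insert, Finset.mem_Icc]; omega) xx m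
  rw [hflip, hIcc_i hi]
  linear_combination hr2 - hr1

end IPos
end Phi

lemma kc_def (k r p : ℤ) : kc k r p
    = ∑ m ∈ Finset.range (p.toNat + 1), ∑ j ∈ Finset.range (p.toNat + 1),
      cc (p - m - j) * hkv xx (-k) m * hkv (fun t => -(yy t)) r j := rfl

lemma kc_nonpos {p : ℤ} (hp : p ≤ 0) (k r : ℤ) : kc k r p = cc p := by
  have h0 : p.toNat = 0 := by omega
  rw [kc_def, h0]
  rw [Finset.sum_range_one, Finset.sum_range_one, hkv_zero_j, hkv_zero_j, mul_one, mul_one]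
  norm_num

lemma hkv_pred_e (i : ℕ) (hi : 1 ≤ i) (m : ℕ) :
    hkv xx (-((i:ℤ)-1)) m = esymF (Finset.Icc 1 (i-1)) xx m := by
  rcases Nat.lt_or_ge i 2 with h2 | h2
  · have hi1 : i = 1 := by omega
    subst hi1
    have h3 : -(((1:ℕ):ℤ)-1) = ((0:ℕ):ℤ) := by norm_num
    rw [h3, hkv_nonneg]
    have he : Finset.Icc 1 0 = (∅ : Finset ℕ) := by decide
    rw [he]
    exact hsymF_eq_esymF_empty xx m
  · have : ((i:ℤ)-1) = (((i-1:ℕ)):ℤ) := by push_cast [Nat.cast_sub hi]; ring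
    rw [this]
    exact hkv_negcast xx (i-1) (by omega) m

lemma hkv_succ_h (i : ℕ) (m : ℕ) :
    hkv xx (-(-(i:ℤ)-1)) m = hsymF (Finset.Icc 1 (i+1)) xx m := by
  have : (-(-(i:ℤ)-1)) = (((i+1:ℕ)):ℤ) := by push_cast; ring
  rw [this, hkv_nonneg]

section Phi2
variable (φ : SR →+* SR)

lemma double_diff (N : ℕ) (F : ℕ → ℕ → SR) (Y : ℕ → SR) (hY : ∀ j, φ (Y j) = Y j) :
    (∑ m ∈ Finset.range N, ∑ j ∈ Finset.range N, F m j * Y j)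
      - φ (∑ m ∈ Finset.range N, ∑ j ∈ Finset.range N, F m j * Y j)
    = ∑ m ∈ Finset.range N, ∑ j ∈ Finset.range N, (F m j - φ (F m j)) * Y j := by
  erw [map_sum, ← Finset.sum_sub_distrib]
  apply Finset.sum_congr rfl
  intro m _
  rw [map_sum, ← Finset.sum_sub_distrib]
  apply Finset.sum_congr rfl
  intro j _
  rw [map_mul, hY j, sub_mul (α := SR)]

lemma map_kc_fix (k r p : ℤ)
    (hY : ∀ j, φ (hkv (fun t => -(yy t)) r j) = hkv (fun t => -(yy t)) r j)
    (hcf : ∀ n : ℤ, φ (cc n) = cc n)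
    (hX : ∀ m, φ (hkv xx (-k) m) = hkv xx (-k) m) :
    φ (kc k r p) = kc k r p := by
  rw [kc_def, map_sum]
  apply Finset.sum_congr rfl
  intro m _
  rw [map_sum]
  apply Finset.sum_congr rfl
  intro j _
  rw [map_mul, map_mul, hY j, hcf, hX]


lemma fix_X_ne {i : ℕ} (hi : 1 ≤ i)
    (hxi : φ (xx i) = xx (i+1)) (hxi1 : φ (xx (i+1)) = xx i)
    (hxo : ∀ j : ℕ, 1 ≤ j → j ≠ i → j ≠ i + 1 → φ (xx j) = xx j)
    {k : ℤ} (hk1 : k ≠ (i:ℤ)) (hk2 : k ≠ -(i:ℤ)) (m : ℕ) :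
    φ (hkv xx (-k) m) = hkv xx (-k) m := by
  rcases le_or_gt k 0 with hk | hk
  · obtain ⟨n, hn⟩ : ∃ n : ℕ, -k = (n:ℤ) := ⟨(-k).toNat, by omega⟩
    rw [hn, hkv_nonneg]
    exact fix_h_ne φ hi hxi hxi1 hxo (by omega) m
  · obtain ⟨n, hn⟩ : ∃ n : ℕ, k = (n:ℤ) := ⟨k.toNat, by omega⟩
    subst hn
    rw [hkv_negcast xx n (by omega) m]
    exact fix_e_ne φ hi hxi hxi1 hxo (by omega) m

lemma case_e {i : ℕ} (hi : 1 ≤ i)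
    (hxi : φ (xx i) = xx (i+1)) (hxi1 : φ (xx (i+1)) = xx i)
    (hxo : ∀ j : ℕ, 1 ≤ j → j ≠ i → j ≠ i + 1 → φ (xx j) = xx j)
    (r : ℤ) (hY : ∀ j, φ (hkv (fun t => -(yy t)) r j) = hkv (fun t => -(yy t)) r j)
    (hcf : ∀ n : ℤ, φ (cc n) = cc n)
    {p : ℤ} (hp : 1 ≤ p) :
    kc (i:ℤ) r p - φ (kc (i:ℤ) r p) = (xx i - xx (i+1)) * kc ((i:ℤ)-1) r (p-1) := by
  have hN : p.toNat = (p-1).toNat + 1 := by omega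
  have hXdef : ∀ m, hkv xx (-(i:ℤ)) m = esymF (Finset.Icc 1 i) xx m := hkv_negcast xx i hi
  have hDzero : esymF (Finset.Icc 1 i) xx 0 - φ (esymF (Finset.Icc 1 i) xx 0) = 0 := by
    rw [esymF_zero, map_one, sub_self]
  calc kc (i:ℤ) r p - φ (kc (i:ℤ) r p)
      = ∑ m ∈ Finset.range (p.toNat+1), ∑ j ∈ Finset.range (p.toNat+1),
          (cc (p - m - j) * hkv xx (-(i:ℤ)) m - φ (cc (p - m - j) * hkv xx (-(i:ℤ)) m))
            * hkv (fun t => -(yy t)) r j := double_diff φ (p.toNat+1) _ _ hY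
    _ = ∑ m ∈ Finset.range (p.toNat+1), ∑ j ∈ Finset.range (p.toNat+1),
          cc (p - m - j) * (esymF (Finset.Icc 1 i) xx m - φ (esymF (Finset.Icc 1 i) xx m))
            * hkv (fun t => -(yy t)) r j := by
        apply Finset.sum_congr rfl; intro m _
        apply Finset.sum_congr rfl; intro j _
        rw [map_mul, hcf, hXdef m]
        ring
    _ = ∑ m ∈ Finset.range p.toNat, ∑ j ∈ Finset.range (p.toNat+1),
          cc (p - ↑(m+1) - j) * (esymF (Finset.Icc 1 i) xx (m+1) - φ (esymF (Finset.Icc 1 i) xx (m+1)))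
            * hkv (fun t => -(yy t)) r j := by
        rw [Finset.sum_range_succ' (fun m => ∑ j ∈ Finset.range (p.toNat+1),
          cc (p - m - j) * (esymF (Finset.Icc 1 i) xx m - φ (esymF (Finset.Icc 1 i) xx m))
            * hkv (fun t => -(yy t)) r j) p.toNat]
        have hz : ∑ j ∈ Finset.range (p.toNat+1),
            cc (p - (0:ℕ) - j) * (esymF (Finset.Icc 1 i) xx 0 - φ (esymF (Finset.Icc 1 i) xx 0))
              * hkv (fun t => -(yy t)) r j = 0 :=
          Finset.sum_eq_zero fun j _ => by rw [hDzero, mul_zero, zero_mul]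
        rw [hz, add_zero]
    _ = ∑ m ∈ Finset.range p.toNat, ∑ j ∈ Finset.range p.toNat,
          cc (p - 1 - m - j) * ((xx i - xx (i+1)) * esymF (Finset.Icc 1 (i-1)) xx m)
            * hkv (fun t => -(yy t)) r j := by
        apply Finset.sum_congr rfl; intro m _
        have e1 : ∑ j ∈ Finset.range (p.toNat+1),
            cc (p - ↑(m+1) - j) * (esymF (Finset.Icc 1 i) xx (m+1) - φ (esymF (Finset.Icc 1 i) xx (m+1)))
              * hkv (fun t => -(yy t)) r j
            = ∑ j ∈ Finset.range (p.toNat+1),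
            cc (p - 1 - m - j) * ((xx i - xx (i+1)) * esymF (Finset.Icc 1 (i-1)) xx m)
              * hkv (fun t => -(yy t)) r j := by
          apply Finset.sum_congr rfl; intro j _
          rw [diff_e φ hi hxi hxi1 hxo m]
          have : p - (↑(m+1):ℤ) - j = p - 1 - m - j := by push_cast; ring
          rw [this]
        rw [e1]
        exact @sum_range_vanish (fun j => cc (p - 1 - m - j)
          * ((xx i - xx (i+1)) * esymF (Finset.Icc 1 (i-1)) xx m)
          * hkv (fun t => -(yy t)) r j) p.toNat
          (fun j hj => by
            show cc (p - 1 - m - j) * _ * _ = 0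
            rw [cc_neg (by omega), zero_mul, zero_mul])
          (p.toNat+1) p.toNat (by omega) (le_refl _)
    _ = (xx i - xx (i+1)) * kc ((i:ℤ)-1) r (p-1) := by
        rw [kc_def, ← hN, Finset.mul_sum]
        apply Finset.sum_congr rfl; intro m _
        rw [Finset.mul_sum]
        apply Finset.sum_congr rfl; intro j _
        rw [hkv_pred_e i hi m]
        ring

lemma case_h {i : ℕ} (hi : 1 ≤ i)
    (hxi : φ (xx i) = xx (i+1)) (hxi1 : φ (xx (i+1)) = xx i)
    (hxo : ∀ j : ℕ, 1 ≤ j → j ≠ i → j ≠ i + 1 → φ (xx j) = xx j)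
    (r : ℤ) (hY : ∀ j, φ (hkv (fun t => -(yy t)) r j) = hkv (fun t => -(yy t)) r j)
    (hcf : ∀ n : ℤ, φ (cc n) = cc n)
    {p : ℤ} (hp : 1 ≤ p) :
    kc (-(i:ℤ)) r p - φ (kc (-(i:ℤ)) r p) = (xx i - xx (i+1)) * kc (-(i:ℤ)-1) r (p-1) := by
  have hN : p.toNat = (p-1).toNat + 1 := by omega
  have hXdef : ∀ m, hkv xx (-(-(i:ℤ))) m = hsymF (Finset.Icc 1 i) xx m := by
    intro m
    rw [neg_neg]
    exact hkv_nonneg xx i m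
  have hDzero : hsymF (Finset.Icc 1 i) xx 0 - φ (hsymF (Finset.Icc 1 i) xx 0) = 0 := by
    rw [hsymF_zero, map_one, sub_self]
  calc kc (-(i:ℤ)) r p - φ (kc (-(i:ℤ)) r p)
      = ∑ m ∈ Finset.range (p.toNat+1), ∑ j ∈ Finset.range (p.toNat+1),
          (cc (p - m - j) * hkv xx (-(-(i:ℤ))) m - φ (cc (p - m - j) * hkv xx (-(-(i:ℤ))) m))
            * hkv (fun t => -(yy t)) r j := double_diff φ (p.toNat+1) _ _ hY
    _ = ∑ m ∈ Finset.range (p.toNat+1), ∑ j ∈ Finset.range (p.toNat+1),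
          cc (p - m - j) * (hsymF (Finset.Icc 1 i) xx m - φ (hsymF (Finset.Icc 1 i) xx m))
            * hkv (fun t => -(yy t)) r j := by
        apply Finset.sum_congr rfl; intro m _
        apply Finset.sum_congr rfl; intro j _
        rw [map_mul, hcf, hXdef m]
        ring
    _ = ∑ m ∈ Finset.range p.toNat, ∑ j ∈ Finset.range (p.toNat+1),
          cc (p - ↑(m+1) - j) * (hsymF (Finset.Icc 1 i) xx (m+1) - φ (hsymF (Finset.Icc 1 i) xx (m+1)))
            * hkv (fun t => -(yy t)) r j := by
        rw [Finset.sum_range_succ' (fun m => ∑ j ∈ Finset.range (p.toNat+1),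
          cc (p - m - j) * (hsymF (Finset.Icc 1 i) xx m - φ (hsymF (Finset.Icc 1 i) xx m))
            * hkv (fun t => -(yy t)) r j) p.toNat]
        have hz : ∑ j ∈ Finset.range (p.toNat+1),
            cc (p - (0:ℕ) - j) * (hsymF (Finset.Icc 1 i) xx 0 - φ (hsymF (Finset.Icc 1 i) xx 0))
              * hkv (fun t => -(yy t)) r j = 0 :=
          Finset.sum_eq_zero fun j _ => by rw [hDzero, mul_zero, zero_mul]
        rw [hz, add_zero]
    _ = ∑ m ∈ Finset.range p.toNat, ∑ j ∈ Finset.range p.toNat,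
          cc (p - 1 - m - j) * ((xx i - xx (i+1)) * hsymF (Finset.Icc 1 (i+1)) xx m)
            * hkv (fun t => -(yy t)) r j := by
        apply Finset.sum_congr rfl; intro m _
        have e1 : ∑ j ∈ Finset.range (p.toNat+1),
            cc (p - ↑(m+1) - j) * (hsymF (Finset.Icc 1 i) xx (m+1) - φ (hsymF (Finset.Icc 1 i) xx (m+1)))
              * hkv (fun t => -(yy t)) r j
            = ∑ j ∈ Finset.range (p.toNat+1),
            cc (p - 1 - m - j) * ((xx i - xx (i+1)) * hsymF (Finset.Icc 1 (i+1)) xx m)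
              * hkv (fun t => -(yy t)) r j := by
          apply Finset.sum_congr rfl; intro j _
          rw [diff_h φ hi hxi hxi1 hxo m]
          have : p - (↑(m+1):ℤ) - j = p - 1 - m - j := by push_cast; ring
          rw [this]
        rw [e1]
        exact @sum_range_vanish (fun j => cc (p - 1 - m - j)
          * ((xx i - xx (i+1)) * hsymF (Finset.Icc 1 (i+1)) xx m)
          * hkv (fun t => -(yy t)) r j) p.toNat
          (fun j hj => by
            show cc (p - 1 - m - j) * _ * _ = 0
            rw [cc_neg (by omega), zero_mul, zero_mul])
          (p.toNat+1) p.toNat (by omega) (le_refl _)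
    _ = (xx i - xx (i+1)) * kc (-(i:ℤ)-1) r (p-1) := by
        rw [kc_def, ← hN, Finset.mul_sum]
        apply Finset.sum_congr rfl; intro m _
        rw [Finset.mul_sum]
        apply Finset.sum_congr rfl; intro j _
        rw [hkv_succ_h i m]
        ring


lemma case_i0_ne (hx1 : φ (xx 1) = -(xx 1)) (hx2 : ∀ j : ℕ, 2 ≤ j → φ (xx j) = xx j)
    (hsc : ∀ q : ℤ, φ (cc q) = cc q + 2 * ∑ m ∈ Finset.range q.toNat, xx 1 ^ (m+1) * cc (q - 1 - m))
    (r : ℤ) (hY : ∀ j, φ (hkv (fun t => -(yy t)) r j) = hkv (fun t => -(yy t)) r j)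
    {k : ℤ} (hk : k ≠ 0) (p : ℤ) :
    φ (kc k r p) = kc k r p := by
  rw [kc_def, map_sum]
  have hcol : ∀ j ∈ Finset.range (p.toNat + 1),
      ∑ m ∈ Finset.range (p.toNat + 1), φ (cc (p - m - j) * hkv xx (-k) m)
        = ∑ m ∈ Finset.range (p.toNat + 1), cc (p - m - j) * hkv xx (-k) m := by
    intro j hj
    have harg : ∀ m : ℕ, p - (m:ℤ) - j = (p - j) - m := fun m => by ring
    have hd : (p - (j:ℤ)).toNat ≤ p.toNat := by omega
    rcases lt_or_ge k 0 with hneg | hpos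
    · obtain ⟨n, hn⟩ : ∃ n : ℕ, -k = (n:ℤ) := ⟨(-k).toNat, by omega⟩
      have hn1 : 1 ≤ n := by omega
      have hX : ∀ m, hkv xx (-k) m = hsymF (Finset.Icc 1 n) xx m := by
        intro m
        rw [hn, hkv_nonneg]
      calc ∑ m ∈ Finset.range (p.toNat + 1), φ (cc (p - m - j) * hkv xx (-k) m)
          = ∑ m ∈ Finset.range (p.toNat + 1), φ (cc ((p - j) - m) * hsymF (Finset.Icc 1 n) xx m) := by
            apply Finset.sum_congr rfl; intro m _
            rw [harg m, hX m]
        _ = ∑ m ∈ Finset.range (p.toNat + 1), cc ((p - j) - m) * hsymF (Finset.Icc 1 n) xx m :=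
            i0fix_h φ hx1 hx2 hsc n hn1 p.toNat (p - j) hd
        _ = ∑ m ∈ Finset.range (p.toNat + 1), cc (p - m - j) * hkv xx (-k) m := by
            apply Finset.sum_congr rfl; intro m _
            rw [harg m, hX m]
    · obtain ⟨n, hn⟩ : ∃ n : ℕ, k = (n:ℤ) := ⟨k.toNat, by omega⟩
      have hn1 : 1 ≤ n := by omega
      have hX : ∀ m, hkv xx (-k) m = esymF (Finset.Icc 1 n) xx m := by
        intro m
        rw [hn]
        exact hkv_negcast xx n hn1 m
      calc ∑ m ∈ Finset.range (p.toNat + 1), φ (cc (p - m - j) * hkv xx (-k) m)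
          = ∑ m ∈ Finset.range (p.toNat + 1), φ (cc ((p - j) - m) * esymF (Finset.Icc 1 n) xx m) := by
            apply Finset.sum_congr rfl; intro m _
            rw [harg m, hX m]
        _ = ∑ m ∈ Finset.range (p.toNat + 1), cc ((p - j) - m) * esymF (Finset.Icc 1 n) xx m :=
            i0fix_e φ hx1 hx2 hsc n hn1 p.toNat (p - j) hd
        _ = ∑ m ∈ Finset.range (p.toNat + 1), cc (p - m - j) * hkv xx (-k) m := by
            apply Finset.sum_congr rfl; intro m _
            rw [harg m, hX m]
  calc ∑ m ∈ Finset.range (p.toNat + 1), φ (∑ j ∈ Finset.range (p.toNat + 1),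
          cc (p - m - j) * hkv xx (-k) m * hkv (fun t => -(yy t)) r j)
      = ∑ m ∈ Finset.range (p.toNat + 1), ∑ j ∈ Finset.range (p.toNat + 1),
          φ (cc (p - m - j) * hkv xx (-k) m) * hkv (fun t => -(yy t)) r j := by
        apply Finset.sum_congr rfl; intro m _
        rw [map_sum]
        apply Finset.sum_congr rfl; intro j _
        rw [map_mul, hY j]
    _ = ∑ j ∈ Finset.range (p.toNat + 1), ∑ m ∈ Finset.range (p.toNat + 1),
          φ (cc (p - m - j) * hkv xx (-k) m) * hkv (fun t => -(yy t)) r j := Finset.sum_comm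
    _ = ∑ j ∈ Finset.range (p.toNat + 1), ∑ m ∈ Finset.range (p.toNat + 1),
          cc (p - m - j) * hkv xx (-k) m * hkv (fun t => -(yy t)) r j := by
        apply Finset.sum_congr rfl; intro j hj
        rw [← Finset.sum_mul, ← Finset.sum_mul, hcol j hj]
    _ = ∑ m ∈ Finset.range (p.toNat + 1), ∑ j ∈ Finset.range (p.toNat + 1),
          cc (p - m - j) * hkv xx (-k) m * hkv (fun t => -(yy t)) r j := Finset.sum_comm

lemma case_i0_k0
    (hsc : ∀ q : ℤ, φ (cc q) = cc q + 2 * ∑ m ∈ Finset.range q.toNat, xx 1 ^ (m+1) * cc (q - 1 - m))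
    (r : ℤ) (hY : ∀ j, φ (hkv (fun t => -(yy t)) r j) = hkv (fun t => -(yy t)) r j)
    {p : ℤ} (hp : 1 ≤ p) :
    kc 0 r p - φ (kc 0 r p) = -(2 * xx 1) * kc (-1) r (p-1) := by
  have hN : p.toNat = (p-1).toNat + 1 := by omega
  have hIcc0 : Finset.Icc 1 0 = (∅ : Finset ℕ) := by
    apply Finset.Icc_eq_empty
    omega
  have hX0 : hkv xx (-(0:ℤ)) 0 = 1 := hkv_zero_j xx _
  have hXs : ∀ m : ℕ, hkv xx (-(0:ℤ)) (m+1) = 0 := by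
    intro m
    rw [neg_zero]
    unfold hkv
    rw [if_pos le_rfl]
    show hsymF (Finset.Icc 1 (0:ℤ).toNat) xx (m+1) = 0
    rw [Int.toNat_zero, hIcc0, hsymF_empty_succ]
  have hkv1 : ∀ m : ℕ, hkv xx (-(-1:ℤ)) m = xx 1 ^ m := by
    intro m
    rw [neg_neg]
    show hkv xx ((1:ℕ):ℤ) m = xx 1 ^ m
    rw [hkv_nonneg, Finset.Icc_self, hsymF_singleton]
  calc kc 0 r p - φ (kc 0 r p)
      = ∑ m ∈ Finset.range (p.toNat+1), ∑ j ∈ Finset.range (p.toNat+1),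
          (cc (p - m - j) * hkv xx (-(0:ℤ)) m - φ (cc (p - m - j) * hkv xx (-(0:ℤ)) m))
            * hkv (fun t => -(yy t)) r j := double_diff φ (p.toNat+1) _ _ hY
    _ = ∑ j ∈ Finset.range (p.toNat+1),
          (cc (p - (0:ℕ) - j) * hkv xx (-(0:ℤ)) 0 - φ (cc (p - (0:ℕ) - j) * hkv xx (-(0:ℤ)) 0))
            * hkv (fun t => -(yy t)) r j := by
        rw [Finset.sum_range_succ' (fun m => ∑ j ∈ Finset.range (p.toNat+1),
          (cc (p - m - j) * hkv xx (-(0:ℤ)) m - φ (cc (p - m - j) * hkv xx (-(0:ℤ)) m))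
            * hkv (fun t => -(yy t)) r j) p.toNat]
        have hz : ∑ m ∈ Finset.range p.toNat, ∑ j ∈ Finset.range (p.toNat+1),
            (cc (p - ↑(m+1) - j) * hkv xx (-(0:ℤ)) (m+1) - φ (cc (p - ↑(m+1) - j) * hkv xx (-(0:ℤ)) (m+1)))
              * hkv (fun t => -(yy t)) r j = 0 := by
          apply Finset.sum_eq_zero
          intro m _
          apply Finset.sum_eq_zero
          intro j _
          rw [hXs m, mul_zero, map_zero, sub_zero (0 : SR), zero_mul]
        rw [hz, zero_add]
    _ = ∑ j ∈ Finset.range (p.toNat+1), ∑ t ∈ Finset.range p.toNat,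
          -(2 * xx 1) * (cc (p - 1 - t - j) * xx 1 ^ t * hkv (fun t => -(yy t)) r j) := by
        apply Finset.sum_congr rfl
        intro j hj
        have hj' : (j:ℤ) ≤ p := by
          rw [Finset.mem_range] at hj
          omega
        have ha0 : p - ((0:ℕ):ℤ) - j = p - j := by norm_num
        rw [hX0, mul_one, ha0, hsc (p - j)]
        have hv : ∑ t ∈ Finset.range (p-j).toNat, xx 1^(t+1) * cc ((p-j) - 1 - t)
            = ∑ t ∈ Finset.range p.toNat, xx 1^(t+1) * cc (p-1-t-j) := by
          rw [@sum_range_vanish (fun t => xx 1^(t+1) * cc ((p-j) - 1 - t)) ((p-j).toNat)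
            (fun t ht => by
              show xx 1^(t+1) * cc ((p-j) - 1 - t) = 0
              rw [cc_neg (by omega), mul_zero]) ((p-j).toNat) p.toNat (le_refl _) (by omega)]
          apply Finset.sum_congr rfl
          intro t _
          have : (p-(j:ℤ)) - 1 - t = p - 1 - t - j := by ring
          rw [this]
        rw [hv]
        calc (cc (p - j) - (cc (p - j) + 2 * ∑ t ∈ Finset.range p.toNat, xx 1^(t+1) * cc (p-1-t-j)))
              * hkv (fun t => -(yy t)) r j
            = (-2 : SR) * ((∑ t ∈ Finset.range p.toNat, xx 1^(t+1) * cc (p-1-t-j))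
                * hkv (fun t => -(yy t)) r j) := by ring
          _ = (-2 : SR) * (∑ t ∈ Finset.range p.toNat, xx 1^(t+1) * cc (p-1-t-j)
                * hkv (fun t => -(yy t)) r j) := by rw [Finset.sum_mul]
          _ = ∑ t ∈ Finset.range p.toNat, (-2:SR) * (xx 1^(t+1) * cc (p-1-t-j)
                * hkv (fun t => -(yy t)) r j) := by rw [Finset.mul_sum]
          _ = ∑ t ∈ Finset.range p.toNat,
                -(2 * xx 1) * (cc (p - 1 - t - j) * xx 1 ^ t * hkv (fun t => -(yy t)) r j) := by
              apply Finset.sum_congr rfl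
              intro t _
              ring
    _ = ∑ j ∈ Finset.range p.toNat, ∑ t ∈ Finset.range p.toNat,
          -(2 * xx 1) * (cc (p - 1 - t - j) * xx 1 ^ t * hkv (fun t => -(yy t)) r j) := by
        rw [Finset.sum_range_succ (fun j => ∑ t ∈ Finset.range p.toNat,
          -(2 * xx 1) * (cc (p - 1 - t - j) * xx 1 ^ t * hkv (fun t => -(yy t)) r j)) p.toNat]
        have hz : ∑ t ∈ Finset.range p.toNat,
            -(2 * xx 1) * (cc (p - 1 - t - (p.toNat:ℤ)) * xx 1 ^ t
              * hkv (fun t => -(yy t)) r p.toNat) = 0 := by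
          apply Finset.sum_eq_zero
          intro t _
          rw [cc_neg (by omega), zero_mul, zero_mul, mul_zero]
        rw [hz, add_zero]
    _ = -(2 * xx 1) * kc (-1) r (p-1) := by
        rw [kc_def, ← hN]
        simp only [Finset.mul_sum]
        conv_rhs => rw [Finset.sum_comm]
        apply Finset.sum_congr rfl; intro j _
        apply Finset.sum_congr rfl; intro t _
        rw [hkv1 t]

end Phi2
end DDAux
/-- Divided differences of the elements `ᵏc^r_p`.  Here `s i : Γ[X,Y] → Γ[X,Y]`
is the action of the simple reflection `sᵢ` of `W_∞`, specified on the
generators: `s i` (for `i ≥ 1`) interchanges `x_i` and `x_{i+1}` and fixes all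
other variables and all `c_p`; `s 0` sends `x_1 ↦ -x_1`, fixes `x_j` (`j ≥ 2`)
and all `y_j`, and `s 0 (c_p) = c_p + 2 ∑_{m=1}^p x_1^m c_{p-m}`.  The claim
`∂ᵢ(ᵏc^r_p) = ᵏ⁻¹c^r_{p-1}` if `k = ±i` and `∂ᵢ(ᵏc^r_p) = 0` otherwise is
expressed by multiplying through by the denominator of `∂ᵢ` (which is `-2x_1`
for `i = 0` and `x_i - x_{i+1}` for `i ≥ 1`). -/
theorem divided_difference_kc
    (s : ℕ → (SR →+* SR))
    (h0x1 : s 0 (xx 1) = -xx 1)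
    (h0x : ∀ j : ℕ, 2 ≤ j → s 0 (xx j) = xx j)
    (h0y : ∀ j : ℕ, 1 ≤ j → s 0 (yy j) = yy j)
    (h0c : ∀ p : ℕ, 1 ≤ p →
      s 0 (C (cQ (p : ℤ))) =
        C (cQ (p : ℤ)) +
          2 * ∑ m ∈ Finset.Icc 1 p, xx 1 ^ m * C (cQ ((p : ℤ) - m)))
    (hx : ∀ i : ℕ, 1 ≤ i →
      s i (xx i) = xx (i + 1) ∧ s i (xx (i + 1)) = xx i ∧
        ∀ j : ℕ, 1 ≤ j → j ≠ i → j ≠ i + 1 → s i (xx j) = xx j)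
    (hy : ∀ i : ℕ, 1 ≤ i → ∀ j : ℕ, 1 ≤ j → s i (yy j) = yy j)
    (hc : ∀ i : ℕ, 1 ≤ i → ∀ p : ℕ, s i (C (cQ (p : ℤ))) = C (cQ (p : ℤ))) :
    ∀ (i : ℕ) (k r p : ℤ),
      kc k r p - s i (kc k r p) =
        (if i = 0 then -(2 * xx 1) else xx i - xx (i + 1)) *
          (if k = (i : ℤ) ∨ k = -(i : ℤ) then kc (k - 1) r (p - 1) else 0) := by

  intro i k r p
  rcases le_or_gt p 0 with hp | hp
  · rw [DDAux.kc_nonpos hp k r, DDAux.map_cc_nonpos (s i) hp, sub_self,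
      DDAux.kc_nonpos (by omega : p - 1 ≤ 0) (k-1) r, DDAux.cc_neg (by omega : p-1 < 0),
      ite_self, mul_zero]
  · by_cases hi0 : i = 0
    · subst hi0
      have hsc := DDAux.s0c_int (s 0) h0c
      have hY := DDAux.fix_Y (s 0) h0y r
      rw [if_pos rfl]
      by_cases hk : k = 0
      · subst hk
        rw [if_pos (Or.inl (by norm_num))]
        have h01 : (0:ℤ) - 1 = -1 := by norm_num
        rw [h01]
        exact DDAux.case_i0_k0 (s 0) hsc r hY hp
      · rw [if_neg (by simp only [Nat.cast_zero, neg_zero, or_self]; exact hk), mul_zero,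
          DDAux.case_i0_ne (s 0) h0x1 h0x hsc r hY hk p, sub_self]
    · have hi1 : 1 ≤ i := by omega
      obtain ⟨hxi, hxi1, hxo⟩ := hx i hi1
      have hY := DDAux.fix_Y (s i) (hy i hi1) r
      have hcf := DDAux.map_cc_all (s i) (hc i hi1)
      rw [if_neg hi0]
      by_cases hk1 : k = (i:ℤ)
      · subst hk1
        rw [if_pos (Or.inl rfl)]
        exact DDAux.case_e (s i) hi1 hxi hxi1 hxo r hY hcf hp
      · by_cases hk2 : k = -(i:ℤ)
        · subst hk2
          rw [if_pos (Or.inr rfl)]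
          exact DDAux.case_h (s i) hi1 hxi hxi1 hxo r hY hcf hp
        · rw [if_neg (by tauto), mul_zero,
            DDAux.map_kc_fix (s i) k r p hY hcf (DDAux.fix_X_ne (s i) hi1 hxi hxi1 hxo hk1 hk2),
            sub_self]
end
end

section
/- The involution $\omega$ of $\Gamma[X,Y]$ determined by $\omega(x_j) = -y_j$, $\omega(y_j) = -x_j$, $\omega(c_p) = c_p$ satisfies $\omega({}^k c^r_p) = {}^{-r} c^{-k}_p$ for all $k, r, p \in \mathbb{Z}$. -/
noncomputable section
open MvPolynomial

/-- The involution `ω` of `Γ[X,Y]` with `ω(x_j) = -y_j`, `ω(y_j) = -x_j`, and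
`ω(c_p) = c_p` (it is `Γ`-linear since it fixes every `c_p`). -/
def omg : SR →ₐ[GammaR] SR :=
  MvPolynomial.aeval (Sum.elim (fun j : ℕ => -(yy j)) (fun j : ℕ => -(xx j)))


lemma omg_hsymF (s : Finset ℕ) (v : ℕ → SR) (j : ℕ) :
    omg (hsymF s v j) = hsymF s (fun i => omg (v i)) j := by
  unfold hsymF
  rw [map_sum]
  refine Finset.sum_congr rfl fun m _ => ?_
  rw [map_multiset_prod, Multiset.map_map]
  rfl

lemma omg_esymF (s : Finset ℕ) (v : ℕ → SR) (j : ℕ) :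
    omg (esymF s v j) = esymF s (fun i => omg (v i)) j := by
  unfold esymF
  rw [map_sum]
  refine Finset.sum_congr rfl fun t _ => map_prod _ _ _

lemma omg_hkv (v : ℕ → SR) (r : ℤ) (j : ℕ) :
    omg (hkv v r j) = hkv (fun i => omg (v i)) r j := by
  unfold hkv
  split
  · exact omg_hsymF _ _ _
  · exact omg_esymF _ _ _

lemma omg_xx (t : ℕ) : omg (xx t) = -(yy t) := by
  simp [omg, xx, yy]

lemma omg_yy (t : ℕ) : omg (yy t) = -(xx t) := by
  simp [omg, xx, yy]

/-- `ω(ᵏc^r_p) = ⁻ʳc^{-k}_p` for all `k, r, p ∈ ℤ`. -/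
theorem omega_kc (k r p : ℤ) : omg (kc k r p) = kc (-r) (-k) p := by
  unfold kc
  rw [map_sum]
  rw [Finset.sum_comm]
  refine Finset.sum_congr rfl fun j _ => ?_
  rw [map_sum]
  refine Finset.sum_congr rfl fun i _ => ?_
  rw [map_mul, map_mul]
  have h1 : omg (C (cQ (p - j - i))) = C (cQ (p - i - j)) := by
    unfold omg; rw [aeval_C, algebraMap_eq, sub_right_comm]
  have h2 : omg (hkv xx (-k) j) = hkv (fun t => -(yy t)) (-k) j := by
    rw [omg_hkv]; congr 1; funext t; exact omg_xx t
  have h3 : omg (hkv (fun t => -(yy t)) r i) = hkv xx (- -r) i := by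
    rw [omg_hkv, neg_neg]; congr 1; funext t; rw [map_neg, omg_yy]; exact neg_neg (xx t)
  rw [h1, h2, h3]
  ring
end
end

section
/- In the ring $\Gamma' = \mathbb{Z}[b_1, b_2, \ldots]/J$ where $J$ is generated by the relations $b_p^2 + 2\sum_{i=1}^{p-1}(-1)^i b_{p+i} b_{p-i} + (-1)^p b_{2p} = 0$ for all $p \geq 1$ (with $b_0 = 1$), the map $\Gamma \to \Gamma'$ sending $c_p \mapsto 2 b_p$ (for $p \geq 1$) is a well-defined injective ring homomorphism. -/
noncomputable section
open MvPolynomial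

/-- The element `b_p` of the free polynomial ring `ℤ[b_1, b_2, …]`, with
`b_0 = 1` and `b_p = 0` for `p < 0`. -/
def bFree : ℤ → MvPolynomial ℕ ℤ := fun p =>
  if p ≤ 0 then (if p = 0 then 1 else 0) else MvPolynomial.X (p.toNat - 1)

/-- The relation `b_p² + 2 ∑_{i=1}^{p-1} (-1)^i b_{p+i} b_{p-i} + (-1)^p b_{2p}`. -/
def relB (p : ℕ) : MvPolynomial ℕ ℤ :=
  bFree (p : ℤ) ^ 2 +
    2 * ∑ i ∈ Finset.Icc 1 (p - 1),
      (-1 : MvPolynomial ℕ ℤ) ^ i * bFree ((p : ℤ) + i) * bFree ((p : ℤ) - i) +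
    (-1 : MvPolynomial ℕ ℤ) ^ p * bFree (2 * (p : ℤ))

/-- The ideal generated by the relations `relB p` for `p ≥ 1`. -/
def IGamP : Ideal (MvPolynomial ℕ ℤ) := Ideal.span {f | ∃ p : ℕ, 1 ≤ p ∧ f = relB p}

/-- The ring `Γ' = ℤ[b]/⟨b_p² + 2∑_{i=1}^{p-1}(-1)^i b_{p+i}b_{p-i} + (-1)^p b_{2p}⟩`. -/
abbrev GammaPR := MvPolynomial ℕ ℤ ⧸ IGamP

/-- The class of `b_p` in `Γ'`. -/
def bQ : ℤ → GammaPR := fun p => Ideal.Quotient.mk IGamP (bFree p)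


namespace GammaAux
open Finsupp

lemma bFree_eq_cFree : bFree = cFree := rfl

lemma cFree_pos (z : ℤ) (hz : 1 ≤ z) : cFree z = X (z.toNat - 1) := by
  unfold cFree
  rw [if_neg (by omega)]

lemma cFree_natCast (p : ℕ) (hp : 1 ≤ p) : cFree (p : ℤ) = X (p - 1) := by
  rw [cFree_pos _ (by exact_mod_cast hp)]
  norm_num

section EvalHelper
variable {A : Type*} [CommRing A] (ψ : MvPolynomial ℕ ℤ →+* A) (t : ℕ → A)
  (ht0 : t 0 = 1) (hX : ∀ n, ψ (X n) = t (n+1))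
include ht0 hX

lemma eval_cFree (z : ℤ) : ψ (cFree z) = if 0 ≤ z then t z.toNat else 0 := by
  unfold cFree
  rcases lt_trichotomy z 0 with h | h | h
  · rw [if_pos (le_of_lt h), if_neg (by omega), if_neg (by omega), map_zero]
  · subst h; simp [ht0]
  · rw [if_neg (by omega), if_pos (by omega), hX]
    congr 1
    omega

lemma eval_cFree_nat (n : ℕ) : ψ (cFree (n : ℤ)) = t n := by
  rw [eval_cFree ψ t ht0 hX]
  rw [if_pos (by positivity)]
  simp

lemma eval_relC (p : ℕ) (hp : 1 ≤ p) :
    ψ (relC p) = t p ^ 2 +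
      2 * (∑ i ∈ Finset.Icc 1 (p-1), (-1 : A)^i * t (p+i) * t (p-i))
      + 2 * ((-1 : A)^p * t (2*p)) := by
  unfold relC
  rw [map_add, map_mul, map_sum, map_pow]
  rw [eval_cFree_nat ψ t ht0 hX]
  have hterm : ∀ i ∈ Finset.Icc 1 p,
      ψ ((-1 : MvPolynomial ℕ ℤ)^i * cFree ((p : ℤ) + i) * cFree ((p : ℤ) - i))
      = (-1 : A)^i * t (p+i) * t (p-i) := by
    intro i hi
    rw [Finset.mem_Icc] at hi
    rw [map_mul, map_mul, map_pow, map_neg, map_one]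
    rw [show ((p : ℤ) + i) = ((p + i : ℕ) : ℤ) by push_cast; ring,
        show ((p : ℤ) - i) = ((p - i : ℕ) : ℤ) by push_cast [hi.2]; ring]
    rw [eval_cFree_nat ψ t ht0 hX, eval_cFree_nat ψ t ht0 hX]
  rw [Finset.sum_congr rfl hterm]
  obtain ⟨q, rfl⟩ : ∃ q, p = q + 1 := ⟨p - 1, by omega⟩
  rw [Finset.sum_Icc_succ_top (by omega : 1 ≤ q + 1)]
  rw [show (q+1) - (q+1) = 0 by omega, ht0, show (q+1) + (q+1) = 2*(q+1) by omega,
    show (q+1) - 1 = q by omega]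
  simp only [map_ofNat]
  ring

lemma eval_relB (p : ℕ) (hp : 1 ≤ p) :
    ψ (relB p) = t p ^ 2 +
      2 * (∑ i ∈ Finset.Icc 1 (p-1), (-1 : A)^i * t (p+i) * t (p-i))
      + (-1 : A)^p * t (2*p) := by
  unfold relB
  rw [bFree_eq_cFree]
  rw [map_add, map_add, map_mul, map_mul, map_sum, map_pow, map_pow, map_neg, map_one]
  rw [eval_cFree_nat ψ t ht0 hX]
  rw [show (2 * (p : ℤ)) = ((2 * p : ℕ) : ℤ) by push_cast; ring]
  rw [eval_cFree_nat ψ t ht0 hX]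
  have hterm : ∀ i ∈ Finset.Icc 1 (p-1),
      ψ ((-1 : MvPolynomial ℕ ℤ)^i * cFree ((p : ℤ) + i) * cFree ((p : ℤ) - i))
      = (-1 : A)^i * t (p+i) * t (p-i) := by
    intro i hi
    rw [Finset.mem_Icc] at hi
    rw [map_mul, map_mul, map_pow, map_neg, map_one]
    rw [show ((p : ℤ) + i) = ((p + i : ℕ) : ℤ) by push_cast; ring,
        show ((p : ℤ) - i) = ((p - i : ℕ) : ℤ) by push_cast [show i ≤ p by omega]; ring]
    rw [eval_cFree_nat ψ t ht0 hX, eval_cFree_nat ψ t ht0 hX]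
  rw [Finset.sum_congr rfl hterm]
  simp only [map_ofNat]

end EvalHelper


def beta : ℕ → MvPolynomial ℕ ℤ
  | 0 => 1
  | (m + 1) =>
    if m % 2 = 0 then X ((m+1) / 2)
    else
      (-1 : MvPolynomial ℕ ℤ)^((m+1)/2+1) *
        ((beta ((m+1)/2)) ^ 2 +
          2 * ∑ i ∈ (Finset.Icc 1 ((m+1)/2 - 1)).attach,
            (-1 : MvPolynomial ℕ ℤ)^(i.1) * beta ((m+1)/2 + i.1) * beta ((m+1)/2 - i.1))
  termination_by m => m
  decreasing_by
  · omega
  · have := i.2; rw [Finset.mem_Icc] at this; omega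
  · omega

lemma beta_zero : beta 0 = 1 := by rw [beta]

lemma beta_odd (k : ℕ) : beta (2*k+1) = X k := by
  rw [beta]
  have h : (2*k) % 2 = 0 := by omega
  rw [if_pos h]
  congr 1
  omega

lemma beta_even (p : ℕ) (hp : 1 ≤ p) :
    beta (2*p) = (-1 : MvPolynomial ℕ ℤ)^(p+1) *
      ((beta p)^2 + 2 * ∑ i ∈ Finset.Icc 1 (p - 1),
        (-1 : MvPolynomial ℕ ℤ)^i * beta (p + i) * beta (p - i)) := by
  obtain ⟨m, hm⟩ : ∃ m, 2*p = m + 1 := ⟨2*p - 1, by omega⟩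
  rw [hm, beta]
  have h1 : ¬ (m % 2 = 0) := by omega
  have h2 : (m+1)/2 = p := by omega
  rw [if_neg h1, h2,
    Finset.sum_attach (Finset.Icc 1 (p-1))
      (fun i => (-1 : MvPolynomial ℕ ℤ)^i * beta (p + i) * beta (p - i))]

lemma beta_key (p : ℕ) (hp : 1 ≤ p) :
    (beta p)^2 + 2 * (∑ i ∈ Finset.Icc 1 (p - 1),
        (-1 : MvPolynomial ℕ ℤ)^i * beta (p + i) * beta (p - i))
      + (-1 : MvPolynomial ℕ ℤ)^p * beta (2*p) = 0 := by
  have h : (-1 : MvPolynomial ℕ ℤ)^(2*p+1) = -1 := by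
    rw [pow_succ, pow_mul, neg_one_sq, one_pow, one_mul]
  rw [beta_even p hp, ← mul_assoc, ← pow_add, show p + (p+1) = 2*p+1 by ring, h]
  ring
def wy : ℕ → ℕ := fun k => 2*k+1

lemma isWH_neg_one_pow (j : ℕ) :
    IsWeightedHomogeneous wy ((-1 : MvPolynomial ℕ ℤ)^j) 0 := by
  have h : ((-1 : MvPolynomial ℕ ℤ))^j = C ((-1 : ℤ)^j) := by rw [map_pow, map_neg, map_one]
  rw [h]; exact isWeightedHomogeneous_C wy _

lemma isWH_two :
    IsWeightedHomogeneous wy (2 : MvPolynomial ℕ ℤ) 0 := by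
  have h : (2 : MvPolynomial ℕ ℤ) = C 2 := by simp
  rw [h]; exact isWeightedHomogeneous_C wy _

lemma beta_hom : ∀ m : ℕ, IsWeightedHomogeneous wy (beta m) m := by
  intro m
  induction m using Nat.strong_induction_on with
  | _ m ih =>
    rcases Nat.eq_zero_or_pos m with h0 | h1
    · subst h0; rw [beta_zero]; exact isWeightedHomogeneous_one ℤ wy
    rcases Nat.even_or_odd m with ⟨p, hp⟩ | ⟨k, hk⟩
    · have hp1 : 1 ≤ p := by omega
      have hm : m = 2*p := by omega
      subst hm
      rw [beta_even p hp1]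
      have hsum : IsWeightedHomogeneous wy
          (∑ i ∈ Finset.Icc 1 (p-1),
            (-1 : MvPolynomial ℕ ℤ)^i * beta (p+i) * beta (p-i)) (2*p) := by
        rw [← mem_weightedHomogeneousSubmodule]
        apply Submodule.sum_mem
        intro i hi
        rw [Finset.mem_Icc] at hi
        rw [mem_weightedHomogeneousSubmodule]
        have h1 := ((isWH_neg_one_pow i).mul (ih (p+i) (by omega))).mul (ih (p-i) (by omega))
        convert h1 using 1 <;> omega
      have hsq : IsWeightedHomogeneous wy ((beta p)^2) (2*p) := by
        have h1 := (ih p (by omega)).mul (ih p (by omega))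
        rw [pow_two]
        convert h1 using 1 <;> omega
      have hin : IsWeightedHomogeneous wy
          ((beta p)^2 + 2 * ∑ i ∈ Finset.Icc 1 (p-1),
            (-1 : MvPolynomial ℕ ℤ)^i * beta (p+i) * beta (p-i)) (2*p) := by
        rw [← mem_weightedHomogeneousSubmodule]
        apply Submodule.add_mem
        · rw [mem_weightedHomogeneousSubmodule]; exact hsq
        · rw [mem_weightedHomogeneousSubmodule]
          have h1 := isWH_two.mul hsum
          convert h1 using 1 <;> omega
      have h1 := (isWH_neg_one_pow (p+1)).mul hin
      convert h1 using 1 <;> omega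
    · have hm : m = 2*k+1 := by omega
      subst hm
      rw [beta_odd]
      exact isWeightedHomogeneous_X ℤ wy k


def mkG : MvPolynomial ℕ ℤ →+* GammaR := Ideal.Quotient.mk IGam

def toG (m : Multiset ℕ) : GammaR := mkG ((m.map X).prod)

def SpanStrict : Submodule ℤ GammaR :=
  Submodule.span ℤ (Set.range fun S : Finset ℕ => toG S.val)

def tG : ℕ → GammaR := fun n => mkG (cFree (n : ℤ))

lemma tG_zero : tG 0 = 1 := by
  unfold tG cFree
  norm_num

lemma tG_X (n : ℕ) : mkG (X n) = tG (n+1) := by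
  unfold tG
  rw [cFree_natCast (n+1) (by omega)]
  norm_num

lemma tG_pos (q : ℕ) (h : 1 ≤ q) : tG q = mkG (X (q-1)) := by
  unfold tG; rw [cFree_natCast q h]

lemma relG (p : ℕ) (hp : 1 ≤ p) :
    tG p ^ 2 +
      2 * (∑ i ∈ Finset.Icc 1 (p-1), (-1 : GammaR)^i * tG (p+i) * tG (p-i))
      + 2 * ((-1 : GammaR)^p * tG (2*p)) = 0 := by
  rw [← eval_relC mkG tG tG_zero tG_X p hp]
  exact Ideal.Quotient.eq_zero_iff_mem.2 (Ideal.subset_span ⟨p, hp, rfl⟩)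

lemma toG_cons (a : ℕ) (m : Multiset ℕ) : toG (a ::ₘ m) = mkG (X a) * toG m := by
  unfold toG
  rw [Multiset.map_cons, Multiset.prod_cons, map_mul]

-- square reduction
lemma sq_reduce (n : ℕ) (m' : Multiset ℕ) :
    toG (n ::ₘ n ::ₘ m') =
      ∑ i ∈ Finset.Icc 1 n, ((-2)*(-1)^i : ℤ) • toG ((n+i) ::ₘ (n-i) ::ₘ m')
      + ((-2)*(-1)^(n+1) : ℤ) • toG ((2*n+1) ::ₘ m') := by
  have hrel := relG (n+1) (by omega)
  rw [show (n+1)-1 = n by omega] at hrel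
  have e1 : ∀ i ∈ Finset.Icc 1 n,
      (-1 : GammaR)^i * tG (n+1+i) * tG (n+1-i)
        = (-1 : GammaR)^i * mkG (X (n+i)) * mkG (X (n-i)) := by
    intro i hi
    rw [Finset.mem_Icc] at hi
    rw [tG_pos (n+1+i) (by omega), tG_pos (n+1-i) (by omega),
      show n+1+i-1 = n+i by omega, show n+1-i-1 = n-i by omega]
  rw [Finset.sum_congr rfl e1] at hrel
  rw [show tG (2*(n+1)) = mkG (X (2*n+1)) from by
        rw [tG_pos (2*(n+1)) (by omega), show 2*(n+1)-1 = 2*n+1 by omega],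
      show tG (n+1)^2 = mkG (X n) * mkG (X n) from by rw [← tG_X]; ring] at hrel
  simp only [toG_cons, zsmul_eq_mul]
  push_cast
  have e3 : ∀ i ∈ Finset.Icc 1 n,
      (-2 : GammaR)*(-1 : GammaR)^i * (mkG (X (n+i)) * (mkG (X (n-i)) * toG m'))
      = ((-1 : GammaR)^i * mkG (X (n+i)) * mkG (X (n-i))) * ((-2) * toG m') := by
    intro i _
    ring
  rw [Finset.sum_congr rfl e3, ← Finset.sum_mul]
  linear_combination (toG m') * hrel

def Wm (m : Multiset ℕ) : ℕ := (m.map (fun n => n+1)).sum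
def Qm (m : Multiset ℕ) : ℕ := (m.map (fun n => (n+1)^2)).sum
def muM (m : Multiset ℕ) : ℕ := Wm m ^ 2 - Qm m

lemma Wm_cons (a : ℕ) (m : Multiset ℕ) : Wm (a ::ₘ m) = (a+1) + Wm m := by
  unfold Wm; rw [Multiset.map_cons, Multiset.sum_cons]

lemma Qm_cons (a : ℕ) (m : Multiset ℕ) : Qm (a ::ₘ m) = (a+1)^2 + Qm m := by
  unfold Qm; rw [Multiset.map_cons, Multiset.sum_cons]

lemma Qm_le (m : Multiset ℕ) : Qm m ≤ Wm m ^ 2 := by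
  induction m using Multiset.induction_on with
  | empty => simp [Qm, Wm]
  | cons a m ih =>
    rw [Qm_cons, Wm_cons]
    calc (a+1)^2 + Qm m ≤ (a+1)^2 + Wm m ^2 := Nat.add_le_add_left ih _
      _ ≤ ((a+1)^2 + 2*(a+1)*Wm m) + Wm m ^2 := Nat.add_le_add_right (Nat.le_add_right _ _) _
      _ = ((a+1) + Wm m)^2 := by ring

lemma muM_lt_pair (n i : ℕ) (h1 : 1 ≤ i) (h2 : i ≤ n) (m' : Multiset ℕ) :
    muM ((n+i) ::ₘ (n-i) ::ₘ m') < muM (n ::ₘ n ::ₘ m') := by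
  obtain ⟨j, rfl⟩ : ∃ j, n = i + j := ⟨n - i, by omega⟩
  have hni : i + j - i = j := by omega
  unfold muM
  rw [hni, Wm_cons, Wm_cons, Wm_cons, Wm_cons, Qm_cons, Qm_cons, Qm_cons, Qm_cons]
  have hW : (i+j+i+1) + ((j+1) + Wm m') = (i+j+1) + ((i+j+1) + Wm m') := by omega
  rw [hW]
  have hQ : (i+j+1)^2 + ((i+j+1)^2 + Qm m') < (i+j+i+1)^2 + ((j+1)^2 + Qm m') := by
    nlinarith
  have hle : (i+j+i+1)^2 + ((j+1)^2 + Qm m') ≤ ((i+j+1) + ((i+j+1) + Wm m'))^2 := by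
    have := Qm_le ((i+j+i) ::ₘ (j) ::ₘ m')
    unfold Qm Wm at this ⊢
    rw [Multiset.map_cons, Multiset.map_cons, Multiset.sum_cons, Multiset.sum_cons,
      Multiset.map_cons, Multiset.map_cons, Multiset.sum_cons, Multiset.sum_cons] at this
    calc (i+j+i+1)^2 + ((j+1)^2 + Qm m')
        ≤ ((i+j+i+1) + ((j+1) + Wm m'))^2 := this
      _ = ((i+j+1) + ((i+j+1) + Wm m'))^2 := by
          have hb : (i+j+i+1) + ((j+1) + Wm m') = (i+j+1) + ((i+j+1) + Wm m') := by omega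
          rw [hb]
  omega

lemma muM_lt_single (n : ℕ) (m' : Multiset ℕ) :
    muM ((2*n+1) ::ₘ m') < muM (n ::ₘ n ::ₘ m') := by
  unfold muM
  rw [Wm_cons, Wm_cons, Wm_cons, Qm_cons, Qm_cons, Qm_cons]
  have hW : (2*n+1+1) + Wm m' = (n+1) + ((n+1) + Wm m') := by omega
  rw [hW]
  have hQ : (n+1)^2 + ((n+1)^2 + Qm m') < (2*n+1+1)^2 + Qm m' := by nlinarith
  have hle : (2*n+1+1)^2 + Qm m' ≤ ((n+1) + ((n+1) + Wm m'))^2 := by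
    have := Qm_le ((2*n+1) ::ₘ m')
    unfold Qm Wm at this
    rw [Multiset.map_cons, Multiset.sum_cons, Multiset.map_cons, Multiset.sum_cons] at this
    calc (2*n+1+1)^2 + Qm m' ≤ ((2*n+1+1) + Wm m')^2 := this
      _ = ((n+1) + ((n+1) + Wm m'))^2 := by
          have hb : (2*n+1+1) + Wm m' = (n+1) + ((n+1) + Wm m') := by omega
          rw [hb]
  omega

lemma toG_mem_aux : ∀ k : ℕ, ∀ m : Multiset ℕ, muM m < k → toG m ∈ SpanStrict := by
  intro k
  induction k with
  | zero => intro m hm; omega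
  | succ k ih =>
    intro m hm
    by_cases hd : m.Nodup
    · exact Submodule.subset_span ⟨⟨m, hd⟩, rfl⟩
    · obtain ⟨n, hn⟩ : ∃ n, 2 ≤ m.count n := by
        by_contra h
        push_neg at h
        exact hd (Multiset.nodup_iff_count_le_one.2 (fun a => by have := h a; omega))
      have h1 : n ∈ m := by rw [← Multiset.count_pos]; omega
      have h2 : n ∈ m.erase n := by
        rw [← Multiset.count_pos, Multiset.count_erase_self]; omega
      set m' := (m.erase n).erase n with hm'def
      have hm' : m = n ::ₘ n ::ₘ m' := by
        rw [hm'def, Multiset.cons_erase h2, Multiset.cons_erase h1]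
      rw [hm', sq_reduce]
      apply Submodule.add_mem
      · apply Submodule.sum_mem
        intro i hi
        rw [Finset.mem_Icc] at hi
        apply Submodule.smul_mem
        apply ih
        have := muM_lt_pair n i hi.1 hi.2 m'
        rw [hm'] at hm
        omega
      · apply Submodule.smul_mem
        apply ih
        have := muM_lt_single n m'
        rw [hm'] at hm
        omega

lemma toG_mem (m : Multiset ℕ) : toG m ∈ SpanStrict := toG_mem_aux (muM m + 1) m (by omega)

lemma prod_X_toMultiset {R : Type*} [CommSemiring R] (d : ℕ →₀ ℕ) :
    ((d.toMultiset).map (X : ℕ → MvPolynomial ℕ R)).prod = monomial d 1 := by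
  induction d using Finsupp.induction with
  | zero => simp
  | single_add a n f ha hn ihf =>
    rw [Finsupp.toMultiset_add, Multiset.map_add, Multiset.prod_add,
      Finsupp.toMultiset_single, Multiset.nsmul_singleton, Multiset.map_replicate, Multiset.prod_replicate,
      X_pow_eq_monomial, ihf, monomial_mul, one_mul]

lemma span_top (x : GammaR) : x ∈ SpanStrict := by
  obtain ⟨F, rfl⟩ := Ideal.Quotient.mk_surjective (I := IGam) x
  show mkG F ∈ SpanStrict
  rw [as_sum F, map_sum]
  apply Submodule.sum_mem
  intro d hd
  have : mkG (monomial d (coeff d F)) = (coeff d F) • toG d.toMultiset := by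
    rw [show monomial d (coeff d F) = (coeff d F) • monomial d (1 : ℤ) from by
          rw [MvPolynomial.smul_monomial, smul_eq_mul, mul_one],
      map_zsmul, toG, prod_X_toMultiset]
  rw [this]
  exact Submodule.smul_mem _ _ (toG_mem _)

-- ## betaQ and the homomorphisms

def betaQ (m : ℕ) : MvPolynomial ℕ ℚ := MvPolynomial.map (Int.castRingHom ℚ) (beta m)

lemma betaQ_zero : betaQ 0 = 1 := by rw [betaQ, beta_zero, map_one]

lemma betaQ_odd (k : ℕ) : betaQ (2*k+1) = X k := by rw [betaQ, beta_odd, map_X]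

lemma betaQ_key (p : ℕ) (hp : 1 ≤ p) :
    (betaQ p)^2 + 2 * (∑ i ∈ Finset.Icc 1 (p - 1),
        (-1 : MvPolynomial ℕ ℚ)^i * betaQ (p + i) * betaQ (p - i))
      + (-1 : MvPolynomial ℕ ℚ)^p * betaQ (2*p) = 0 := by
  have h := congrArg (MvPolynomial.map (Int.castRingHom ℚ)) (beta_key p hp)
  simpa only [map_add, map_mul, map_pow, map_sum, map_neg, map_one, map_ofNat,
    map_zero, betaQ] using h

lemma betaQ_hom (m : ℕ) : IsWeightedHomogeneous wy (betaQ m) m := by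
  intro d hd
  apply beta_hom m
  have h : ((coeff d (beta m) : ℤ) : ℚ) ≠ 0 := by
    simpa [betaQ, coeff_map] using hd
  exact_mod_cast h

def uHom : MvPolynomial ℕ ℤ →+* MvPolynomial ℕ ℚ :=
  eval₂Hom ((C : ℚ →+* MvPolynomial ℕ ℚ).comp (Int.castRingHom ℚ)) (fun n => betaQ (n+1))

lemma uHom_X (n : ℕ) : uHom (X n) = betaQ (n+1) := by
  simp [uHom]

lemma uHom_relB (p : ℕ) (hp : 1 ≤ p) : uHom (relB p) = 0 := by
  rw [eval_relB uHom betaQ betaQ_zero uHom_X p hp]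
  exact betaQ_key p hp

def ubar : GammaPR →+* MvPolynomial ℕ ℚ :=
  Ideal.Quotient.lift IGamP uHom (by
    intro a ha
    rw [← RingHom.mem_ker]
    revert a ha
    rw [← SetLike.le_def, IGamP]
    rw [Ideal.span_le]
    rintro x ⟨p, hp, rfl⟩
    rw [SetLike.mem_coe, RingHom.mem_ker]
    exact uHom_relB p hp)

def doubling : MvPolynomial ℕ ℤ →+* MvPolynomial ℕ ℤ :=
  eval₂Hom C (fun n => 2 * X n)

def mkP : MvPolynomial ℕ ℤ →+* GammaPR := Ideal.Quotient.mk IGamP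

def tB : ℕ → GammaPR := fun n => mkP (bFree n)

lemma tB_zero : tB 0 = 1 := by unfold tB bFree; norm_num

lemma tB_X (n : ℕ) : mkP (X n) = tB (n+1) := by
  unfold tB
  rw [bFree_eq_cFree, cFree_natCast (n+1) (by omega)]
  norm_num

lemma tB_pos (q : ℕ) (h : 1 ≤ q) : tB q = mkP (X (q-1)) := by
  unfold tB; rw [bFree_eq_cFree, cFree_natCast q h]

lemma relB_quot (p : ℕ) (hp : 1 ≤ p) :
    tB p ^ 2 +
      2 * (∑ i ∈ Finset.Icc 1 (p-1), (-1 : GammaPR)^i * tB (p+i) * tB (p-i))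
      + (-1 : GammaPR)^p * tB (2*p) = 0 := by
  rw [← eval_relB mkP tB tB_zero tB_X p hp]
  exact Ideal.Quotient.eq_zero_iff_mem.2 (Ideal.subset_span ⟨p, hp, rfl⟩)

def tD : ℕ → GammaPR := fun n => if n = 0 then 1 else 2 * mkP (X (n-1))

lemma tD_zero : tD 0 = 1 := by simp [tD]

lemma tD_X (n : ℕ) : (mkP.comp doubling) (X n) = tD (n+1) := by
  simp only [RingHom.comp_apply, doubling, eval₂Hom_X']
  rw [map_mul, map_ofNat]
  simp [tD]

lemma tD_eq (q : ℕ) (hq : 1 ≤ q) : tD q = 2 * tB q := by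
  rw [tD, if_neg (by omega), tB_pos q hq]

lemma doubling_relC (p : ℕ) (hp : 1 ≤ p) : (mkP.comp doubling) (relC p) = 0 := by
  rw [eval_relC (mkP.comp doubling) tD tD_zero tD_X p hp]
  have hrel := relB_quot p hp
  rw [tD_eq p hp, tD_eq (2*p) (by omega)]
  have e3 : ∀ i ∈ Finset.Icc 1 (p-1),
      (-1 : GammaPR)^i * tD (p+i) * tD (p-i)
      = ((-1 : GammaPR)^i * tB (p+i) * tB (p-i)) * 4 := by
    intro i hi
    rw [Finset.mem_Icc] at hi
    rw [tD_eq (p+i) (by omega), tD_eq (p-i) (by omega)]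
    ring
  rw [Finset.sum_congr rfl e3, ← Finset.sum_mul]
  linear_combination (4 : GammaPR) * hrel

def fHom : GammaR →+* GammaPR :=
  Ideal.Quotient.lift IGam (mkP.comp doubling) (by
    intro a ha
    rw [← RingHom.mem_ker]
    revert a ha
    rw [← SetLike.le_def, IGam]
    rw [Ideal.span_le]
    rintro x ⟨p, hp, rfl⟩
    rw [SetLike.mem_coe, RingHom.mem_ker]
    exact doubling_relC p hp)

def Wb : GammaR →+* MvPolynomial ℕ ℚ := ubar.comp fHom

lemma fHom_mk (q : MvPolynomial ℕ ℤ) : fHom (mkG q) = mkP (doubling q) :=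
  Ideal.Quotient.lift_mk IGam _ _

lemma Wb_mk (q : MvPolynomial ℕ ℤ) : Wb (mkG q) = uHom (doubling q) := by
  rw [Wb, RingHom.comp_apply, fHom_mk]
  exact Ideal.Quotient.lift_mk IGamP _ _

lemma Wb_toG (m : Multiset ℕ) :
    Wb (toG m) = (m.map (fun n => (2 : MvPolynomial ℕ ℚ) * betaQ (n+1))).prod := by
  rw [toG, Wb_mk]
  have h : uHom (doubling ((m.map X).prod)) = (uHom.comp doubling) ((m.map X).prod) := rfl
  rw [h, map_multiset_prod, Multiset.map_map]
  congr 1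
  apply Multiset.map_congr rfl
  intro n _
  show uHom (doubling (X n)) = 2 * betaQ (n+1)
  rw [show doubling (X n) = 2 * X n from by simp [doubling], map_mul, uHom_X, map_ofNat]

lemma prod_map_const_mul {A : Type*} [CommRing A] (c : A) (g : ℕ → A) (m : Multiset ℕ) :
    (m.map (fun k => c * g k)).prod = c ^ (Multiset.card m) * (m.map g).prod := by
  induction m using Multiset.induction_on with
  | empty => simp
  | cons a s ih =>
    rw [Multiset.map_cons, Multiset.prod_cons, ih, Multiset.map_cons, Multiset.prod_cons,
      Multiset.card_cons, pow_succ]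
    ring

def BQ (S : Finset ℕ) : MvPolynomial ℕ ℚ := ∏ n ∈ S, betaQ (n+1)

def wS (S : Finset ℕ) : ℕ := ∑ n ∈ S, (n+1)

lemma Wb_toG_strict (S : Finset ℕ) :
    Wb (toG S.val) = (2 : MvPolynomial ℕ ℚ)^S.card * BQ S := by
  rw [Wb_toG, prod_map_const_mul]
  rw [BQ, Finset.prod_eq_multiset_prod]
  rfl

lemma BQ_hom (S : Finset ℕ) : IsWeightedHomogeneous wy (BQ S) (wS S) := by
  rw [BQ, wS]
  exact IsWeightedHomogeneous.prod S _ _ (fun n _ => betaQ_hom (n+1))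

-- ## Glaisher injection

def vpart (s : ℕ) : ℕ := (s+1).factorization 2

def kpart (s : ℕ) : ℕ := (ordCompl[2] (s+1) - 1) / 2

lemma ordCompl_odd (s : ℕ) : 2 * kpart s + 1 = ordCompl[2] (s+1) := by
  have h1 : ¬ (2 ∣ ordCompl[2] (s+1)) := Nat.not_dvd_ordCompl Nat.prime_two (by omega)
  have h2 : 0 < ordCompl[2] (s+1) := Nat.ordCompl_pos 2 (by omega)
  have h3 : ordCompl[2] (s+1) % 2 = 1 := by omega
  unfold kpart
  omega

lemma kv_eq (s : ℕ) : (2 * kpart s + 1) * 2 ^ (vpart s) = s + 1 := by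
  rw [ordCompl_odd s]
  rw [mul_comm]
  exact Nat.ordProj_mul_ordCompl_eq_self (s+1) 2

lemma kv_inj {s t : ℕ} (hk : kpart s = kpart t) (hv : vpart s = vpart t) : s = t := by
  have h1 := kv_eq s
  have h2 := kv_eq t
  rw [hk, hv] at h1
  omega

def Phi (S : Finset ℕ) : ℕ →₀ ℕ := ∑ s ∈ S, Finsupp.single (kpart s) (2^(vpart s))

lemma Phi_apply (S : Finset ℕ) (k : ℕ) :
    Phi S k = ∑ s ∈ S.filter (fun s => kpart s = k), 2^(vpart s) := by
  rw [Phi, Finset.sum_apply']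
  rw [Finset.sum_filter]
  apply Finset.sum_congr rfl
  intro s _
  rw [Finsupp.single_apply]

lemma Phi_apply_image (S : Finset ℕ) (k : ℕ) :
    Phi S k = ∑ a ∈ (S.filter (fun s => kpart s = k)).image vpart, 2^a := by
  rw [Phi_apply, Finset.sum_image]
  intro s hs t ht hv
  rw [Finset.mem_coe, Finset.mem_filter] at hs ht
  exact kv_inj (hs.2.trans ht.2.symm) hv

lemma Phi_inj : Function.Injective Phi := by
  have key : ∀ S T : Finset ℕ, Phi S = Phi T → ∀ s ∈ S, s ∈ T := by
    intro S T h s hs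
    have hA : (S.filter (fun t => kpart t = kpart s)).image vpart
        = (T.filter (fun t => kpart t = kpart s)).image vpart := by
      apply Finset.geomSum_injective (le_refl 2)
      simp only
      rw [← Phi_apply_image, ← Phi_apply_image, h]
    have hmem : vpart s ∈ (S.filter (fun t => kpart t = kpart s)).image vpart :=
      Finset.mem_image_of_mem _ (Finset.mem_filter.2 ⟨hs, rfl⟩)
    rw [hA] at hmem
    obtain ⟨t, ht, hvt⟩ := Finset.mem_image.1 hmem
    rw [Finset.mem_filter] at ht
    exact kv_inj ht.2 hvt ▸ ht.1
  intro S T h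
  ext s
  exact ⟨fun hs => key S T h s hs, fun hs => key T S h.symm s hs⟩

lemma Phi_weight (S : Finset ℕ) : Finsupp.weight wy (Phi S) = wS S := by
  rw [Phi, map_sum, wS]
  apply Finset.sum_congr rfl
  intro s _
  rw [Finsupp.weight_apply, Finsupp.sum_single_index (by simp)]
  show 2^(vpart s) • wy (kpart s) = s + 1
  rw [smul_eq_mul, wy, mul_comm]
  exact kv_eq s

-- ## finite sets of strict/odd partitions of weight N

def SN (N : ℕ) : Finset (Finset ℕ) :=
  ((Finset.range N).powerset).filter (fun S => wS S = N)

lemma mem_SN_of {N : ℕ} {S : Finset ℕ} (h : wS S = N) : S ∈ SN N := by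
  rw [SN, Finset.mem_filter, Finset.mem_powerset]
  refine ⟨fun n hn => Finset.mem_range.2 ?_, h⟩
  have h2 : n + 1 ≤ wS S :=
    Finset.single_le_sum (f := fun n => n + 1) (fun i _ => Nat.zero_le _) hn
  omega

def bnd (N : ℕ) : ℕ →₀ ℕ := ∑ k ∈ Finset.range N, Finsupp.single k N

lemma bnd_apply (N k : ℕ) : bnd N k = if k < N then N else 0 := by
  rw [bnd, Finset.sum_apply']
  rw [Finset.sum_congr rfl (fun j _ => Finsupp.single_apply (a := j))]
  by_cases h : k < N
  · rw [if_pos h, Finset.sum_eq_single k (fun j _ hj => if_neg hj) (fun hk => by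
      exact absurd (Finset.mem_range.2 h) hk), if_pos rfl]
  · rw [if_neg h]
    apply Finset.sum_eq_zero
    intro j hj
    rw [Finset.mem_range] at hj
    rw [if_neg (by omega)]

def DN (N : ℕ) : Finset (ℕ →₀ ℕ) :=
  (Finset.Icc 0 (bnd N)).filter (fun d => Finsupp.weight wy d = N)

lemma mem_DN_of {N : ℕ} {d : ℕ →₀ ℕ} (h : Finsupp.weight wy d = N) : d ∈ DN N := by
  rw [DN, Finset.mem_filter, Finset.mem_Icc]
  refine ⟨⟨(zero_le : 0 ≤ d), ?_⟩, h⟩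
  rw [Finsupp.le_def]
  intro k
  rw [bnd_apply]
  by_cases hk : d k = 0
  · rw [hk]; exact Nat.zero_le _
  · have h1 : wy k ≤ Finsupp.weight wy d := Finsupp.le_weight_of_ne_zero (fun _ => Nat.zero_le _) hk
    have h2 : d k ≤ Finsupp.weight wy d := Finsupp.le_weight wy (by simp [wy]) d
    rw [h] at h1 h2
    rw [wy] at h1
    rw [if_pos (by omega)]
    omega

lemma card_SN_le (N : ℕ) : (SN N).card ≤ (DN N).card := by
  apply Finset.card_le_card_of_injOn Phi
  · intro S hS
    rw [Finset.mem_coe, SN, Finset.mem_filter] at hS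
    exact mem_DN_of (by rw [Phi_weight, hS.2])
  · exact Function.Injective.injOn Phi_inj

-- ## linear independence of the BQ family in each weight

lemma homog_mem_monomial_span {N : ℕ} {p : MvPolynomial ℕ ℚ}
    (hp : IsWeightedHomogeneous wy p N) :
    p ∈ Submodule.span ℚ
      (Set.range fun d : (DN N : Finset (ℕ →₀ ℕ)) => (monomial d.1 (1:ℚ) : MvPolynomial ℕ ℚ)) := by
  rw [as_sum p]
  apply Submodule.sum_mem
  intro d hd
  have hdN : d ∈ DN N := mem_DN_of (hp (MvPolynomial.mem_support_iff.1 hd))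
  have h : (monomial d) (coeff d p) = (coeff d p) • (monomial d (1:ℚ)) := by
    rw [MvPolynomial.smul_monomial, smul_eq_mul, mul_one]
  rw [h]
  exact Submodule.smul_mem _ _ (Submodule.subset_span ⟨⟨d, hdN⟩, rfl⟩)

lemma monomials_li (N : ℕ) :
    LinearIndependent ℚ
      (fun d : (DN N : Finset (ℕ →₀ ℕ)) => (monomial d.1 (1:ℚ) : MvPolynomial ℕ ℚ)) := by
  have h2 := (MvPolynomial.basisMonomials ℕ ℚ).linearIndependent.comp
    (fun d : (DN N : Finset (ℕ →₀ ℕ)) => d.1) Subtype.val_injective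
  rwa [coe_basisMonomials] at h2

lemma Wb_mem_span (x : GammaR) :
    Wb x ∈ Submodule.span ℚ (Set.range BQ) := by
  have hx := span_top x
  induction hx using Submodule.span_induction with
  | mem y hy =>
    obtain ⟨S, rfl⟩ := hy
    rw [Wb_toG_strict,
      show ((2:MvPolynomial ℕ ℚ))^S.card * BQ S = ((2:ℚ)^S.card) • BQ S from by
        rw [smul_eq_C_mul, map_pow, map_ofNat]]
    exact Submodule.smul_mem _ _ (Submodule.subset_span ⟨S, rfl⟩)
  | zero => rw [map_zero]; exact Submodule.zero_mem _
  | add y z hy hz hy' hz' => rw [map_add]; exact Submodule.add_mem _ hy' hz'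
  | smul a y hy hy' =>
    rw [map_zsmul, ← Int.cast_smul_eq_zsmul ℚ]
    exact Submodule.smul_mem _ _ hy'

lemma component_mem_span {N : ℕ} {y : MvPolynomial ℕ ℚ}
    (hy : y ∈ Submodule.span ℚ (Set.range BQ)) :
    (weightedHomogeneousComponent wy N) y ∈
      Submodule.span ℚ (Set.range fun S : (SN N : Finset (Finset ℕ)) => BQ S.1) := by
  induction hy using Submodule.span_induction with
  | mem z hz =>
    obtain ⟨S, rfl⟩ := hz
    by_cases h : wS S = N
    · have hhom : IsWeightedHomogeneous wy (BQ S) N := h ▸ BQ_hom S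
      rw [hhom.weightedHomogeneousComponent_same]
      exact Submodule.subset_span ⟨⟨S, mem_SN_of h⟩, rfl⟩
    · rw [(BQ_hom S).weightedHomogeneousComponent_ne N (fun hN => h (hN.symm ▸ rfl))]
      · exact Submodule.zero_mem _
  | zero => rw [map_zero]; exact Submodule.zero_mem _
  | add y z hy hz hy' hz' => rw [map_add]; exact Submodule.add_mem _ hy' hz'
  | smul a y hy hy' => rw [map_smul]; exact Submodule.smul_mem _ _ hy'

lemma monomial_mem_BQ_span {N : ℕ} (d : ℕ →₀ ℕ) (hd : d ∈ DN N) :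
    (monomial d (1:ℚ) : MvPolynomial ℕ ℚ) ∈
      Submodule.span ℚ (Set.range fun S : (SN N : Finset (Finset ℕ)) => BQ S.1) := by
  have hwt : Finsupp.weight wy d = N := by
    rw [DN, Finset.mem_filter] at hd
    exact hd.2
  set c := Multiset.card d.toMultiset with hc
  have h1 : Wb (toG (d.toMultiset.map (fun k => 2*k)))
      = (2:MvPolynomial ℕ ℚ)^c * monomial d 1 := by
    rw [Wb_toG, Multiset.map_map]
    have he : ((fun n => (2:MvPolynomial ℕ ℚ) * betaQ (n+1)) ∘ (fun k => 2*k))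
        = (fun k => 2 * (X k : MvPolynomial ℕ ℚ)) := by
      funext k
      show (2:MvPolynomial ℕ ℚ) * betaQ (2*k+1) = 2 * X k
      rw [betaQ_odd]
    rw [he, prod_map_const_mul, prod_X_toMultiset, hc]
  have h2 : (monomial d (1:ℚ) : MvPolynomial ℕ ℚ)
      = ((2:ℚ)^c)⁻¹ • Wb (toG (d.toMultiset.map (fun k => 2*k))) := by
    rw [h1, show ((2:MvPolynomial ℕ ℚ))^c * monomial d 1 = ((2:ℚ)^c) • monomial d 1 from by
        rw [smul_eq_C_mul, map_pow, map_ofNat (C : ℚ →+* MvPolynomial ℕ ℚ) 2], smul_smul,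
      inv_mul_cancel₀ (by positivity), one_smul]
  have h3 : (monomial d (1:ℚ) : MvPolynomial ℕ ℚ) ∈ Submodule.span ℚ (Set.range BQ) := by
    rw [h2]
    exact Submodule.smul_mem _ _ (Wb_mem_span _)
  have h5 : (weightedHomogeneousComponent wy N) (monomial d (1:ℚ)) = monomial d 1 :=
    (isWeightedHomogeneous_monomial wy d 1 hwt).weightedHomogeneousComponent_same
  rw [← h5]
  exact component_mem_span h3

lemma BQ_li (N : ℕ) :
    LinearIndependent ℚ (fun S : (SN N : Finset (Finset ℕ)) => BQ S.1) := by
  rw [linearIndependent_iff_card_eq_finrank_span]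
  have hspan : Submodule.span ℚ (Set.range fun S : (SN N : Finset (Finset ℕ)) => BQ S.1)
      = Submodule.span ℚ
        (Set.range fun d : (DN N : Finset (ℕ →₀ ℕ)) => (monomial d.1 (1:ℚ) : MvPolynomial ℕ ℚ)) := by
    apply le_antisymm
    · rw [Submodule.span_le]
      rintro _ ⟨S, rfl⟩
      have h := S.2
      simp only [SN, Finset.mem_filter] at h
      refine homog_mem_monomial_span ?_
      have hb := BQ_hom S.1
      rwa [h.2] at hb
    · rw [Submodule.span_le]
      rintro _ ⟨d, rfl⟩
      exact SetLike.mem_coe.2 (monomial_mem_BQ_span d.1 d.2)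
  have hrank2 : Module.finrank ℚ (Submodule.span ℚ
      (Set.range fun d : (DN N : Finset (ℕ →₀ ℕ)) => (monomial d.1 (1:ℚ) : MvPolynomial ℕ ℚ)))
      = (DN N).card := by
    rw [finrank_span_eq_card (monomials_li N), Fintype.card_coe]
  have hle1 : Module.finrank ℚ (Submodule.span ℚ
      (Set.range fun S : (SN N : Finset (Finset ℕ)) => BQ S.1)) ≤ (SN N).card := by
    simpa [Fintype.card_coe, Set.finrank] using
      finrank_range_le_card (fun S : (SN N : Finset (Finset ℕ)) => BQ S.1)
  rw [Set.finrank, hspan, hrank2, Fintype.card_coe]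
  rw [hspan, hrank2] at hle1
  have := card_SN_le N
  omega

end GammaAux

/-- The map `Γ → Γ'` sending `c_p ↦ 2 b_p` for all `p ≥ 1` is a well-defined
injective ring homomorphism. -/
theorem gamma_to_gammaP :
    ∃ f : GammaR →+* GammaPR,
      Function.Injective f ∧ ∀ p : ℤ, 1 ≤ p → f (cQ p) = 2 * bQ p := by
  classical
  refine ⟨GammaAux.fHom, ?_, ?_⟩
  · -- injectivity
    have hWinj : Function.Injective ⇑GammaAux.Wb := by
      rw [injective_iff_map_eq_zero]
      intro x hx
      obtain ⟨l, hl⟩ := Finsupp.mem_span_range_iff_exists_finsupp.1 (GammaAux.span_top x)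
      have hall : ∀ S : Finset ℕ, l S = 0 := by
        intro S0
        by_contra h0
        have hS0 : S0 ∈ l.support := Finsupp.mem_support_iff.2 h0
        set N := GammaAux.wS S0 with hN
        set c : Finset ℕ → ℚ := fun S => (l S : ℚ) * 2^(S.card) with hcdef
        have hE : ∑ S ∈ l.support, c S • GammaAux.BQ S = 0 := by
          have h1 := congrArg (⇑GammaAux.Wb) hl
          rw [hx, map_finsuppSum] at h1
          rw [Finsupp.sum] at h1
          rw [← h1]
          apply Finset.sum_congr rfl
          intro S _
          rw [map_zsmul, GammaAux.Wb_toG_strict,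
            show ((2:MvPolynomial ℕ ℚ))^S.card * GammaAux.BQ S
                = ((2:ℚ)^S.card) • GammaAux.BQ S from by
              rw [MvPolynomial.smul_eq_C_mul, map_pow,
                map_ofNat (MvPolynomial.C : ℚ →+* MvPolynomial ℕ ℚ) 2],
            ← Int.cast_smul_eq_zsmul ℚ, smul_smul, hcdef]
        have hcompS : ∀ S ∈ l.support,
            (MvPolynomial.weightedHomogeneousComponent GammaAux.wy N)
              (c S • GammaAux.BQ S)
            = if GammaAux.wS S = N then c S • GammaAux.BQ S else 0 := by
          intro S _
          rw [map_smul]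
          by_cases h : GammaAux.wS S = N
          · rw [if_pos h,
              (show MvPolynomial.IsWeightedHomogeneous GammaAux.wy (GammaAux.BQ S) N from by
                have := GammaAux.BQ_hom S; rwa [h] at this).weightedHomogeneousComponent_same]
          · rw [if_neg h,
              (GammaAux.BQ_hom S).weightedHomogeneousComponent_ne N (fun hc => h hc.symm),
              smul_zero]
        have h2 := congrArg
          (⇑(MvPolynomial.weightedHomogeneousComponent GammaAux.wy N)) hE
        rw [map_sum, map_zero] at h2
        have hE2 : ∑ S ∈ l.support.filter (fun S => GammaAux.wS S = N),
            c S • GammaAux.BQ S = 0 := by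
          calc ∑ S ∈ l.support.filter (fun S => GammaAux.wS S = N), c S • GammaAux.BQ S
              = ∑ S ∈ l.support, if GammaAux.wS S = N then c S • GammaAux.BQ S else 0 :=
                Finset.sum_filter _ _
            _ = ∑ S ∈ l.support,
                  (MvPolynomial.weightedHomogeneousComponent GammaAux.wy N)
                    (c S • GammaAux.BQ S) := (Finset.sum_congr rfl hcompS).symm
            _ = 0 := h2
        have hli := GammaAux.BQ_li N
        rw [Fintype.linearIndependent_iff] at hli
        have hg : ∑ S : (GammaAux.SN N : Finset (Finset ℕ)),
            (fun S : (GammaAux.SN N : Finset (Finset ℕ)) =>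
              if S.1 ∈ l.support then c S.1 else 0) S • GammaAux.BQ S.1 = 0 := by
          have e1 : ∀ S : (GammaAux.SN N : Finset (Finset ℕ)),
              (if S.1 ∈ l.support then c S.1 else 0) • GammaAux.BQ S.1
              = (fun T => (if T ∈ l.support then c T else 0) • GammaAux.BQ T) S.1 :=
            fun S => rfl
          rw [Finset.sum_congr rfl (fun S _ => e1 S),
            Finset.sum_coe_sort (GammaAux.SN N)
              (fun T => (if T ∈ l.support then c T else 0) • GammaAux.BQ T)]
          have e2 : ∀ T ∈ (GammaAux.SN N : Finset (Finset ℕ)),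
              (if T ∈ l.support then c T else 0) • GammaAux.BQ T
              = if T ∈ l.support then c T • GammaAux.BQ T else 0 := by
            intro T _
            rw [ite_smul, zero_smul]
          rw [Finset.sum_congr rfl e2, ← Finset.sum_filter]
          have e3 : (GammaAux.SN N).filter (fun T => T ∈ l.support)
              = l.support.filter (fun S => GammaAux.wS S = N) := by
            ext T
            simp only [Finset.mem_filter]
            constructor
            · rintro ⟨hT1, hT2⟩
              refine ⟨hT2, ?_⟩
              simp only [GammaAux.SN, Finset.mem_filter] at hT1
              exact hT1.2
            · rintro ⟨hT1, hT2⟩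
              exact ⟨GammaAux.mem_SN_of hT2, hT1⟩
          rw [e3]
          exact hE2
        have hz := hli _ hg ⟨S0, GammaAux.mem_SN_of hN.symm⟩
        simp only [hS0, if_pos] at hz
        rw [hcdef] at hz
        have h2ne : ((2:ℚ))^S0.card ≠ 0 := by positivity
        have : (l S0 : ℚ) = 0 := by
          rcases mul_eq_zero.1 hz with h | h
          · exact h
          · exact absurd h h2ne
        exact h0 (by exact_mod_cast this)
      have hl0 : l = 0 := Finsupp.ext hall
      rw [hl0, Finsupp.sum_zero_index] at hl
      exact hl.symm
    have hcomp : ⇑GammaAux.Wb = ⇑GammaAux.ubar ∘ ⇑GammaAux.fHom := rfl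
    rw [hcomp] at hWinj
    exact Function.Injective.of_comp hWinj
  · intro p hp
    show GammaAux.fHom (Ideal.Quotient.mk IGam (cFree p)) = 2 * bQ p
    rw [show Ideal.Quotient.mk IGam (cFree p) = GammaAux.mkG (cFree p) from rfl,
      GammaAux.fHom_mk, GammaAux.cFree_pos p hp,
      show GammaAux.doubling (X (p.toNat - 1)) = 2 * X (p.toNat - 1) from by
        simp [GammaAux.doubling],
      map_mul, map_ofNat]
    show 2 * GammaAux.mkP (X (p.toNat - 1)) = 2 * Ideal.Quotient.mk IGamP (bFree p)
    rw [GammaAux.bFree_eq_cFree, GammaAux.cFree_pos p hp]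
    rfl
end
end
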